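/- arXiv:1002.1432 — 5 statements merged into one kernel-verified Lean document; each statement's English description precedes it below -/
import Mathlib

section
/- Let F be a differential field of characteristic zero, let N be a no new constants extension of F, and let E and K be differential subfields of N with K ⊇ F. Suppose E = F(ζ₁,…,ζₙ) is an iterated antiderivative extension of F. Then the compositum KE = K(ζ₁,…,ζₙ) is an iterated antiderivative extension of K. Furthermore, if KE ≠ K, then the set {ζ₁,…,ζₙ} contains elements η₁,…,η_t which are iterated antiderivatives of K, are algebraically independent over K, and satisfy KE = K(η₁,…,η_t). -/
/-- A derivation on a field: an additive map satisfying the Leibniz rule. -/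
def IsDeriv {E : Type*} [Field E] (D : E → E) : Prop :=
  (∀ x y : E, D (x + y) = D x + D y) ∧ ∀ x y : E, D (x * y) = D x * y + x * D y

/-- A subfield closed under the derivation, i.e. a differential subfield. -/
def IsDiffSubfield {E : Type*} [Field E] (D : E → E) (K : Subfield E) : Prop :=
  ∀ x ∈ K, D x ∈ K

/-- The subfield generated by a subfield `F` together with a set `S`, i.e. `F(S)`. -/
def adjoinSF {E : Type*} [Field E] (F : Subfield E) (S : Set E) : Subfield E :=
  Subfield.closure (↑F ∪ S)

/-- `ζ 0, …, ζ (n-1)` are iterated antiderivatives of `F`: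
`(ζ i)' ∈ F(ζ 0, …, ζ (i-1))` for every `i`. -/
def IsIterAntideriv {E : Type*} [Field E] (D : E → E) (F : Subfield E) {n : ℕ}
    (ζ : Fin n → E) : Prop :=
  ∀ i, D (ζ i) ∈ adjoinSF F (ζ '' {j | j < i})

/-- `M` is a no new constants extension of `K`: the constants of `M` are exactly
the constants of `K`. -/
def NoNewConstants {E : Type*} [Field E] (D : E → E) (K M : Subfield E) : Prop :=
  K ≤ M ∧ ∀ x ∈ M, D x = 0 → x ∈ K

/-- `K` is an iterated antiderivative extension of `F`. -/
def IsIAE {E : Type*} [Field E] (D : E → E) (F K : Subfield E) : Prop :=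
  NoNewConstants D F K ∧
    ∃ (n : ℕ) (ζ : Fin n → E), IsIterAntideriv D F ζ ∧ K = adjoinSF F (Set.range ζ)

/-- `K` is an antiderivative extension of `F`. -/
def IsAE {E : Type*} [Field E] (D : E → E) (F K : Subfield E) : Prop :=
  NoNewConstants D F K ∧
    ∃ (n : ℕ) (ζ : Fin n → E), (∀ i, D (ζ i) ∈ (F : Set E)) ∧ K = adjoinSF F (Set.range ζ)

/-- A differential automorphism of `E` over `F`: a field automorphism fixing `F`
pointwise and commuting with the derivation. -/
def IsDiffAut {E : Type*} [Field E] (D : E → E) (F : Subfield E) (σ : E ≃+* E) : Prop :=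
  (∀ x ∈ F, σ x = x) ∧ ∀ y : E, σ (D y) = D (σ y)

/-- `M` is a minimal differential field extension of `K`. -/
def IsMinimalDiffExt {E : Type*} [Field E] (D : E → E) (K M : Subfield E) : Prop :=
  IsDiffSubfield D M ∧ K < M ∧
    ∀ L : Subfield E, IsDiffSubfield D L → K ≤ L → L ≤ M → L = K ∨ L = M

/-- The field of constants of a differential subfield `F`. -/
def constantsOf {E : Type*} [Field E] (D : E → E) (hD : IsDeriv D) (F : Subfield E) :
    Subfield E where
  carrier := {x : E | x ∈ F ∧ D x = 0}
  zero_mem' := by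
    refine ⟨F.zero_mem, ?_⟩
    have h := hD.1 0 0
    simp only [add_zero] at h
    exact left_eq_add.mp h
  one_mem' := by
    refine ⟨F.one_mem, ?_⟩
    have h := hD.2 1 1
    simp only [mul_one, one_mul] at h
    exact left_eq_add.mp h
  add_mem' := by
    rintro a b ⟨haF, ha⟩ ⟨hbF, hb⟩
    exact ⟨F.add_mem haF hbF, by rw [hD.1 a b, ha, hb, add_zero]⟩
  mul_mem' := by
    rintro a b ⟨haF, ha⟩ ⟨hbF, hb⟩
    exact ⟨F.mul_mem haF hbF, by rw [hD.2 a b, ha, hb, zero_mul, mul_zero, add_zero]⟩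
  neg_mem' := by
    rintro a ⟨haF, ha⟩
    refine ⟨F.neg_mem haF, ?_⟩
    have h0 : D 0 = 0 := by
      have h := hD.1 0 0
      simp only [add_zero] at h
      exact left_eq_add.mp h
    have h := hD.1 a (-a)
    rw [add_neg_cancel, h0, ha, zero_add] at h
    exact h.symm
  inv_mem' := by
    rintro a ⟨haF, ha⟩
    refine ⟨F.inv_mem haF, ?_⟩
    by_cases h0 : a = 0
    · subst h0; rw [inv_zero]; exact ha
    · have h1 : D 1 = 0 := by
        have h := hD.2 1 1
        simp only [mul_one, one_mul] at h
        exact left_eq_add.mp h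
      have h := hD.2 a a⁻¹
      rw [mul_inv_cancel₀ h0, h1, ha, zero_mul, zero_add] at h
      rcases mul_eq_zero.mp h.symm with h' | h'
      · exact absurd h' h0
      · exact h'

/-- The antiderivative closure of `L` in `E`: the subfield generated over `L`
by all antiderivatives of `L` lying in `E`. -/
def adCl {E : Type*} [Field E] (D : E → E) (L : Subfield E) : Subfield E :=
  adjoinSF L {x : E | D x ∈ L}

/-- The differential subfield generated by `F` and `u`, i.e. `F⟨u⟩ = F(u, u', u'', …)`. -/
def diffAdjoin {E : Type*} [Field E] (D : E → E) (F : Subfield E) (u : E) : Subfield E :=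
  sInf {M : Subfield E | IsDiffSubfield D M ∧ F ≤ M ∧ u ∈ M}

/-- The transcendence degree of `K` over `F` (both viewed inside an ambient field `E`):
the supremum of cardinalities of subsets of `K` that are algebraically independent
over `F`. -/
noncomputable def trdegSF {E : Type*} [Field E] (F K : Subfield E) : Cardinal :=
  ⨆ s : {s : Set E // s ⊆ (K : Set E) ∧ AlgebraicIndependent F ((↑) : s → E)},
    Cardinal.mk s.1
section Aux

variable {N : Type*} [Field N] {D : N → N}

theorem d_zero (hD : IsDeriv D) : D 0 = 0 := by
  have h := hD.1 0 0; simp only [add_zero] at h; exact left_eq_add.mp h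

theorem d_one (hD : IsDeriv D) : D 1 = 0 := by
  have h := hD.2 1 1; simp only [mul_one, one_mul] at h; exact left_eq_add.mp h

theorem d_neg (hD : IsDeriv D) (x : N) : D (-x) = -D x := by
  have h := hD.1 x (-x)
  rw [add_neg_cancel, d_zero hD] at h
  exact (neg_eq_of_add_eq_zero_right h.symm).symm

theorem d_natCast (hD : IsDeriv D) (n : ℕ) : D (n : N) = 0 := by
  induction n with
  | zero => simpa using d_zero hD
  | succ k ih => push_cast; rw [hD.1, ih, d_one hD, add_zero]

theorem d_pow (hD : IsDeriv D) (x : N) : ∀ k : ℕ, D (x ^ k) = (k : N) * x ^ (k - 1) * D x := by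
  intro k
  induction k with
  | zero => simpa using d_one hD
  | succ k ih =>
    rw [pow_succ, hD.2, ih]
    cases k with
    | zero => simp
    | succ l =>
      have hx : x ^ (l + 1 - 1) * x = x ^ (l + 1) := by
        rw [Nat.add_sub_cancel, pow_succ]
      push_cast
      rw [show x ^ (l + 1) = x ^ l * x from pow_succ x l]
      ring

theorem d_inv (hD : IsDeriv D) (x : N) : D x⁻¹ = -(D x * (x⁻¹ * x⁻¹)) := by
  by_cases hx : x = 0
  · subst hx; simp [d_zero hD]
  · have h := hD.2 x x⁻¹
    rw [mul_inv_cancel₀ hx, d_one hD] at h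
    have h2 : x * D x⁻¹ = -(D x * x⁻¹) := eq_neg_of_add_eq_zero_right h.symm
    have h3 : D x⁻¹ = x⁻¹ * (x * D x⁻¹) := by
      rw [← mul_assoc, inv_mul_cancel₀ hx, one_mul]
    rw [h3, h2]; ring

theorem le_adjoinSF (K : Subfield N) (S : Set N) : K ≤ adjoinSF K S :=
  fun _ hx => Subfield.subset_closure (Or.inl hx)

theorem subset_adjoinSF (K : Subfield N) (S : Set N) : S ⊆ ↑(adjoinSF K S) :=
  fun _ hx => Subfield.subset_closure (Or.inr hx)

theorem adjoinSF_le {K M : Subfield N} {S : Set N} (hK : K ≤ M) (hS : S ⊆ ↑M) :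
    adjoinSF K S ≤ M :=
  Subfield.closure_le.2 (Set.union_subset hK hS)

theorem adjoinSF_mono {K K' : Subfield N} {S S' : Set N} (h1 : K ≤ K') (h2 : S ⊆ S') :
    adjoinSF K S ≤ adjoinSF K' S' :=
  adjoinSF_le (h1.trans (le_adjoinSF K' S')) (h2.trans (subset_adjoinSF K' S'))

theorem adjoinSF_eq_self {K : Subfield N} {S : Set N} (h : S ⊆ ↑K) : adjoinSF K S = K :=
  le_antisymm (adjoinSF_le le_rfl h) (le_adjoinSF K S)

theorem adjoinSF_adjoinSF (K : Subfield N) (S T : Set N) :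
    adjoinSF (adjoinSF K S) T = adjoinSF K (S ∪ T) := by
  apply le_antisymm
  · apply adjoinSF_le
    · apply adjoinSF_le
      · exact le_adjoinSF K (S ∪ T)
      · exact fun x hx => subset_adjoinSF K (S ∪ T) (Or.inl hx)
    · exact fun x hx => subset_adjoinSF K (S ∪ T) (Or.inr hx)
  · apply adjoinSF_le
    · exact (le_adjoinSF K S).trans (le_adjoinSF (adjoinSF K S) T)
    · apply Set.union_subset
      · exact fun x hx => (le_adjoinSF (adjoinSF K S) T) (subset_adjoinSF K S hx)
      · exact subset_adjoinSF (adjoinSF K S) T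

theorem isDiffSubfield_adjoinSF (hD : IsDeriv D) {K : Subfield N} {S : Set N}
    (hK : IsDiffSubfield D K) (hS : ∀ s ∈ S, D s ∈ adjoinSF K S) :
    IsDiffSubfield D (adjoinSF K S) := by
  intro x hx
  refine Subfield.closure_induction (p := fun y _ => D y ∈ adjoinSF K S)
    ?_ ?_ ?_ ?_ ?_ ?_ hx
  · exact fun z hz => hz.elim (fun h => le_adjoinSF K S (hK z h)) (fun h => hS z h)
  · show D (1 : N) ∈ adjoinSF K S
    rw [d_one hD]; exact zero_mem _
  · intro a b _ _ iha ihb; show D (a + b) ∈ adjoinSF K S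
    rw [hD.1]; exact add_mem iha ihb
  · intro a _ iha; show D (-a) ∈ adjoinSF K S
    rw [d_neg hD]; exact neg_mem iha
  · intro a ha iha
    show D a⁻¹ ∈ adjoinSF K S
    rw [d_inv hD]
    exact neg_mem (mul_mem iha (mul_mem (inv_mem ha) (inv_mem ha)))
  · intro a b ha hb iha ihb; show D (a * b) ∈ adjoinSF K S
    rw [hD.2]; exact add_mem (mul_mem iha hb) (mul_mem ha ihb)

end Aux
section Aux2

variable {N : Type*} [Field N] {D : N → N}

open Polynomial in
theorem d_aeval (hD : IsDeriv D) {K : Subfield N} (hK : IsDiffSubfield D K) (u : N)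
    (r : Polynomial K) :
    D (aeval u r) = aeval u (r.sum fun j a => C (⟨D ↑a, hK _ a.2⟩ : K) * X ^ j)
      + aeval u (derivative r) * D u := by
  induction r using Polynomial.induction_on' with
  | add f g hf hg =>
    rw [map_add, hD.1, hf, hg, Polynomial.sum_add_index, map_add, derivative_add, map_add]
    · ring
    · intro i
      simp only [Subfield.coe_zero]
      rw [show (⟨D (0 : N), hK _ (Subfield.zero_mem K)⟩ : K) = 0 from Subtype.ext (d_zero hD)]
      simp
    · intro i b₁ b₂
      have : (⟨D ↑(b₁ + b₂), hK _ (b₁ + b₂).2⟩ : K)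
          = ⟨D ↑b₁, hK _ b₁.2⟩ + ⟨D ↑b₂, hK _ b₂.2⟩ := Subtype.ext (by push_cast; exact hD.1 _ _)
      rw [this, C_add, add_mul]
  | monomial j a =>
    rw [aeval_monomial, hD.2, Polynomial.sum_monomial_index, derivative_monomial, aeval_monomial,
      map_mul, aeval_C]
    · have h1 : (algebraMap K N) a = (a : N) := rfl
      have h2 : (algebraMap K N) (⟨D ↑a, hK _ a.2⟩ : K) = D (a : N) := rfl
      have h3 : (algebraMap K N) (a * (j : K)) = (a : N) * (j : N) := by push_cast; rfl
      rw [map_pow, aeval_X, h1, h2, h3, d_pow hD u j]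
      ring
    · rw [show (⟨D ((0:K) : N), hK _ (Subfield.zero_mem K)⟩ : K) = 0 from
        Subtype.ext (by simpa using d_zero hD)]
      simp

open Polynomial in
theorem mem_of_deriv_mem_of_isAlgebraic [CharZero N] (hD : IsDeriv D) {K : Subfield N}
    (hK : IsDiffSubfield D K) (hC : ∀ x : N, D x = 0 → x ∈ K) {u : N}
    (hu : D u ∈ K) (halg : IsAlgebraic K u) : u ∈ K := by
  have hint : IsIntegral K u := halg.isIntegral
  set p := minpoly K u with hp
  have hm : 0 < p.natDegree := minpoly.natDegree_pos hint
  set q : Polynomial K := (p.sum fun j a => C (⟨D ↑a, hK _ a.2⟩ : K) * X ^ j)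
      + C (⟨D u, hu⟩ : K) * derivative p with hq
  have hq0 : aeval u q = 0 := by
    have hmain := d_aeval hD hK u p
    rw [minpoly.aeval, d_zero hD] at hmain
    rw [hq, map_add, map_mul, aeval_C]
    have : (algebraMap K N) (⟨D u, hu⟩ : K) = D u := rfl
    rw [this]
    rw [eq_comm] at hmain
    linear_combination hmain
  have hsumcoeff : ∀ k, (p.sum fun j a => C (⟨D ↑a, hK _ a.2⟩ : K) * X ^ j).coeff k
      = ⟨D ↑(p.coeff k), hK _ (p.coeff k).2⟩ := by
    intro k
    rw [Polynomial.sum_def, Polynomial.finset_sum_coeff]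
    simp only [coeff_C_mul, coeff_X_pow, mul_ite, mul_one, mul_zero]
    rw [Finset.sum_ite_eq p.support k]
    split_ifs with h
    · rfl
    · have hck : p.coeff k = 0 := Polynomial.notMem_support_iff.1 h
      refine (Subtype.ext ?_).symm
      show D ((p.coeff k : N)) = ((0 : K) : N)
      have h0 : ((p.coeff k : N)) = 0 := by exact_mod_cast congrArg Subtype.val hck
      rw [h0]
      simpa using d_zero hD
  have hqcoeff : ∀ k, q.coeff k = ⟨D ↑(p.coeff k), hK _ (p.coeff k).2⟩
      + (⟨D u, hu⟩ : K) * (derivative p).coeff k := by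
    intro k
    rw [hq, coeff_add, hsumcoeff, coeff_C_mul]
  have hdeg : q.degree < p.degree := by
    rw [Polynomial.degree_eq_natDegree (minpoly.ne_zero hint),
      Polynomial.degree_lt_iff_coeff_zero]
    intro k hk
    have hk' : p.natDegree ≤ k := by exact_mod_cast hk
    rw [hqcoeff, coeff_derivative]
    have h1 : p.coeff (k + 1) = 0 := coeff_eq_zero_of_natDegree_lt (by omega)
    rcases eq_or_lt_of_le hk' with he | hlt
    · subst he
      rw [(minpoly.monic hint).coeff_natDegree, h1]
      apply Subtype.ext
      push_cast
      simp [d_one hD]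
    · rw [coeff_eq_zero_of_natDegree_lt hlt, h1]
      apply Subtype.ext
      push_cast
      simp [d_zero hD]
  have hqz : q = 0 := by
    by_contra hne
    exact absurd (Polynomial.degree_le_of_dvd (minpoly.dvd K u hq0) hne) (not_le.2 hdeg)
  have hco := hqcoeff (p.natDegree - 1)
  rw [hqz, coeff_zero, coeff_derivative] at hco
  have hsucc : p.natDegree - 1 + 1 = p.natDegree := Nat.succ_pred_eq_of_pos hm
  rw [hsucc, (minpoly.monic hint).coeff_natDegree] at hco
  have hcoN := congrArg (fun z : K => (z : N)) hco
  push_cast at hcoN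
  have hcast : ((p.natDegree - 1 : ℕ) : N) + 1 = (p.natDegree : N) := by
    have := congrArg (Nat.cast : ℕ → N) hsucc
    push_cast at this
    exact this
  have hkey : D ((p.coeff (p.natDegree - 1) : N) + (p.natDegree : N) * u) = 0 := by
    rw [hD.1, hD.2, d_natCast hD]
    linear_combination (-1 : N) * hcoN - D u * hcast
  have hcmem := hC _ hkey
  have hmne : ((p.natDegree : N)) ≠ 0 := Nat.cast_ne_zero.2 hm.ne'
  have hrep : u = (((p.coeff (p.natDegree - 1) : N) + (p.natDegree : N) * u)
      - (p.coeff (p.natDegree - 1) : N)) * (p.natDegree : N)⁻¹ := by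
    field_simp
    ring
  rw [hrep]
  exact K.mul_mem (K.sub_mem hcmem (p.coeff _).2) (K.inv_mem (natCast_mem K p.natDegree))

end Aux2
section Aux3

variable {N : Type*} [Field N] {D : N → N}

theorem transcendental_adjoin_of_not_isAlgebraic {K : Subfield N} {t : ℕ} {η : Fin t → N}
    {x : N} (h : ¬ IsAlgebraic (adjoinSF K (Set.range η)) x) :
    Transcendental (Algebra.adjoin ↥K (Set.range η)) x := by
  intro halg
  apply h
  set L := adjoinSF K (Set.range η) with hL
  have hmem : ∀ a : Algebra.adjoin ↥K (Set.range η), (a : N) ∈ L := by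
    rintro ⟨a, ha⟩
    refine Algebra.adjoin_induction (p := fun y _ => y ∈ L) ?_ ?_ ?_ ?_ ha
    · exact fun y hy => subset_adjoinSF K (Set.range η) hy
    · exact fun r => le_adjoinSF K (Set.range η) r.2
    · exact fun a b _ _ hpa hpb => add_mem hpa hpb
    · exact fun a b _ _ hpa hpb => mul_mem hpa hpb
  let φ : Algebra.adjoin ↥K (Set.range η) →+* L :=
    { toFun := fun a => ⟨(a : N), hmem a⟩
      map_one' := rfl
      map_mul' := fun a b => rfl
      map_zero' := rfl
      map_add' := fun a b => rfl }
  have hφ : Function.Injective φ := fun a b hab =>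
    Subtype.ext (congrArg (fun z : ↥L => (z : N)) hab)
  obtain ⟨r, hr0, hr⟩ := halg
  refine ⟨r.map φ, ?_, ?_⟩
  · exact (Polynomial.map_ne_zero_iff hφ).2 hr0
  · rw [Polynomial.aeval_def, Polynomial.eval₂_map]
    have : (algebraMap ↥L N).comp φ = algebraMap (Algebra.adjoin ↥K (Set.range η)) N :=
      RingHom.ext fun a => rfl
    rw [this, ← Polynomial.aeval_def, hr]

theorem algebraicIndependent_snoc {K : Subfield N} {t : ℕ} {η : Fin t → N}
    (h : AlgebraicIndependent ↥K η) {x : N}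
    (hx : ¬ IsAlgebraic (adjoinSF K (Set.range η)) x) :
    AlgebraicIndependent ↥K (Fin.snoc η x) := by
  have h2 : AlgebraicIndependent ↥K (fun o : Option (Fin t) => o.elim x η) :=
    (h.option_iff_transcendental x).2 (transcendental_adjoin_of_not_isAlgebraic hx)
  have h3 := h2.comp finSuccEquivLast finSuccEquivLast.injective
  have : ((fun o : Option (Fin t) => o.elim x η) ∘ finSuccEquivLast) = Fin.snoc η x := by
    funext i
    refine Fin.lastCases ?_ ?_ i
    · simp [finSuccEquivLast_last]
    · intro j
      simp [finSuccEquivLast_castSucc]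
  rwa [this] at h3

theorem image_lt_castSucc {n : ℕ} (f : Fin (n + 1) → N) (i : Fin n) :
    f '' {j | j < Fin.castSucc i} = (f ∘ Fin.castSucc) '' {j | j < i} := by
  ext y
  constructor
  · rintro ⟨j, hj, rfl⟩
    induction j using Fin.lastCases with
    | last => exact absurd (Fin.le_last _) (not_le.2 hj)
    | cast k => exact ⟨k, Fin.castSucc_lt_castSucc_iff.1 hj, rfl⟩
  · rintro ⟨j, hj, rfl⟩
    exact ⟨Fin.castSucc j, Fin.castSucc_lt_castSucc_iff.2 hj, rfl⟩

theorem image_lt_last {n : ℕ} (f : Fin (n + 1) → N) :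
    f '' {j | j < Fin.last n} = Set.range (f ∘ Fin.castSucc) := by
  ext y
  constructor
  · rintro ⟨j, hj, rfl⟩
    induction j using Fin.lastCases with
    | last => simp at hj
    | cast k => exact ⟨k, rfl⟩
  · rintro ⟨j, rfl⟩
    exact ⟨Fin.castSucc j, Fin.castSucc_lt_last j, rfl⟩

theorem range_fin_succ_eq {n : ℕ} (f : Fin (n + 1) → N) :
    Set.range f = Set.range (f ∘ Fin.castSucc) ∪ {f (Fin.last n)} := by
  ext y
  constructor
  · rintro ⟨j, rfl⟩
    induction j using Fin.lastCases with
    | last => exact Or.inr rfl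
    | cast k => exact Or.inl ⟨k, rfl⟩
  · rintro (⟨j, rfl⟩ | hy)
    · exact ⟨Fin.castSucc j, rfl⟩
    · exact ⟨Fin.last n, hy.symm⟩

theorem key_lemma [CharZero N] (hD : IsDeriv D) (K : Subfield N) (hK : IsDiffSubfield D K)
    (hC : ∀ x : N, D x = 0 → x ∈ K) :
    ∀ (n : ℕ) (ζ : Fin n → N), IsIterAntideriv D K ζ →
    ∃ (t : ℕ) (η : Fin t → N), (∀ i, ∃ j, η i = ζ j) ∧ IsIterAntideriv D K η ∧
      AlgebraicIndependent ↥K η ∧ adjoinSF K (Set.range η) = adjoinSF K (Set.range ζ) := by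
  intro n
  induction n with
  | zero =>
    intro ζ _
    refine ⟨0, Fin.elim0, fun i => i.elim0, fun i => i.elim0,
      algebraicIndependent_empty_type, ?_⟩
    rw [Set.range_eq_empty, Set.range_eq_empty]
  | succ n ih =>
    intro ζ hζ
    have hζ' : IsIterAntideriv D K (ζ ∘ Fin.castSucc) := by
      intro i
      have h := hζ (Fin.castSucc i)
      rwa [image_lt_castSucc] at h
    obtain ⟨t, η, hsel, hiter, hind, heq⟩ := ih (ζ ∘ Fin.castSucc) hζ'
    set L := adjoinSF K (Set.range η) with hLdef
    have hKL : K ≤ L := le_adjoinSF K _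
    have hLd : IsDiffSubfield D L := by
      refine isDiffSubfield_adjoinSF hD hK ?_
      rintro s ⟨i, rfl⟩
      exact adjoinSF_mono le_rfl (Set.image_subset_range η _) (hiter i)
    have hCL : ∀ x : N, D x = 0 → x ∈ L := fun x hx => hKL (hC x hx)
    have heq2 : adjoinSF K (Set.range η) = adjoinSF K (Set.range (ζ ∘ Fin.castSucc)) :=
      hLdef.symm.trans heq
    have hxL : D (ζ (Fin.last n)) ∈ L := by
      have h := hζ (Fin.last n)
      rw [image_lt_last] at h
      rw [hLdef, heq2]
      exact h
    have hrange : adjoinSF K (Set.range ζ) = adjoinSF L {ζ (Fin.last n)} := by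
      rw [range_fin_succ_eq ζ, hLdef, heq2, adjoinSF_adjoinSF]
    by_cases halg : IsAlgebraic ↥L (ζ (Fin.last n))
    · have hxmem : ζ (Fin.last n) ∈ L :=
        mem_of_deriv_mem_of_isAlgebraic hD hLd hCL hxL halg
      refine ⟨t, η, ?_, hiter, hind, ?_⟩
      · intro i
        obtain ⟨j, hj⟩ := hsel i
        exact ⟨Fin.castSucc j, hj⟩
      · rw [hrange, adjoinSF_eq_self (Set.singleton_subset_iff.2 hxmem)]
    · have hcomp : (Fin.snoc η (ζ (Fin.last n)) : Fin (t + 1) → N) ∘ Fin.castSucc = η := by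
        funext j
        simp
      refine ⟨t + 1, Fin.snoc η (ζ (Fin.last n)), ?_, ?_, ?_, ?_⟩
      · intro i
        refine Fin.lastCases ?_ ?_ i
        · exact ⟨Fin.last n, by rw [Fin.snoc_last]⟩
        · intro j
          obtain ⟨k, hk⟩ := hsel j
          exact ⟨Fin.castSucc k, by rw [Fin.snoc_castSucc]; exact hk⟩
      · intro i
        refine Fin.lastCases ?_ ?_ i
        · rw [image_lt_last, hcomp, Fin.snoc_last]
          rw [hLdef] at hxL
          exact hxL

        · intro j
          rw [image_lt_castSucc, hcomp, Fin.snoc_castSucc]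
          exact hiter j
      · exact algebraicIndependent_snoc hind halg
      · have hr : Set.range (Fin.snoc η (ζ (Fin.last n)) : Fin (t + 1) → N)
            = Set.range η ∪ {ζ (Fin.last n)} := by
          rw [range_fin_succ_eq, hcomp, Fin.snoc_last]
        rw [hr, ← adjoinSF_adjoinSF, ← hLdef, ← hrange]

end Aux3

/-- Theorem: base change of an iterated antiderivative extension.
`N` is the ambient no new constants extension of `F`; `E = F(ζ₁,…,ζₙ)` is an
iterated antiderivative extension of `F`, `K ⊇ F` is a differential subfield of `N`.
Then `KE = K(ζ₁,…,ζₙ)` is an iterated antiderivative extension of `K`, and if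
`KE ≠ K` then some of the `ζᵢ`'s form a family of iterated antiderivatives of `K`,
algebraically independent over `K`, generating `KE` over `K`. -/
theorem statement0 {N : Type*} [Field N] [CharZero N] (D : N → N) (hD : IsDeriv D)
    (F E K : Subfield N)
    (hF : IsDiffSubfield D F) (hE : IsDiffSubfield D E) (hK : IsDiffSubfield D K)
    (hNF : ∀ x : N, D x = 0 → x ∈ F)  -- N is a no new constants extension of F
    (hFK : F ≤ K)
    (n : ℕ) (ζ : Fin n → N)
    (hζ : IsIterAntideriv D F ζ) (hEeq : E = adjoinSF F (Set.range ζ)) :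
    IsIAE D K (adjoinSF K (Set.range ζ)) ∧
      (adjoinSF K (Set.range ζ) ≠ K →
        ∃ (t : ℕ) (η : Fin t → N), (∀ i, ∃ j, η i = ζ j) ∧
          IsIterAntideriv D K η ∧ AlgebraicIndependent K η ∧
          adjoinSF K (Set.range η) = adjoinSF K (Set.range ζ)) := by
  have hCK : ∀ x : N, D x = 0 → x ∈ K := fun x hx => hFK (hNF x hx)
  have hζK : IsIterAntideriv D K ζ := fun i => adjoinSF_mono hFK subset_rfl (hζ i)
  constructor
  · exact ⟨⟨le_adjoinSF K _, fun x _ hx => hCK x hx⟩, n, ζ, hζK, rfl⟩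
  · intro _
    exact key_lemma hD K hK hCK n ζ hζK
end

section
/- Let F be a differential field of characteristic zero, let E be an iterated antiderivative extension of F, and let K be a differential subfield of E with K ⊇ F. If u ∈ E is a nonzero element such that u′/u ∈ K, then u ∈ K. -/
set_option maxHeartbeats 1000000
set_option synthInstance.maxHeartbeats 1000000

namespace S4

open Polynomial

variable {E : Type*} [Field E] {D : E → E}

/-- Bundle an `IsDeriv` function as a Mathlib `Derivation`. -/
noncomputable def toDer (hD : IsDeriv D) : Derivation ℤ E E :=
  Derivation.mk'
    (AddMonoidHom.toIntLinearMap
      { toFun := D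
        map_zero' := by
          have h := hD.1 0 0
          rw [add_zero] at h
          exact (left_eq_add.mp h)
        map_add' := hD.1 })
    (fun a b => by
      simpa [smul_eq_mul, mul_comm, add_comm] using hD.2 a b)

@[simp] lemma toDer_apply (hD : IsDeriv D) (x : E) : toDer hD x = D x := rfl

lemma D_zero (hD : IsDeriv D) : D (0 : E) = 0 := (toDer hD).map_zero

lemma D_one (hD : IsDeriv D) : D (1 : E) = 0 := (toDer hD).map_one_eq_zero

lemma D_neg (hD : IsDeriv D) (x : E) : D (-x) = -D x := (toDer hD).map_neg x

lemma D_natCast (hD : IsDeriv D) (n : ℕ) : D (n : E) = 0 := (toDer hD).map_natCast n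

lemma D_inv (hD : IsDeriv D) (x : E) : D x⁻¹ = -(x⁻¹ ^ 2) * D x := by
  simpa [smul_eq_mul] using (toDer hD).leibniz_inv x

lemma D_pow (hD : IsDeriv D) (x : E) (n : ℕ) : D (x ^ n) = n * x ^ (n - 1) * D x := by
  have h := (toDer hD).leibniz_pow (a := x) n
  simp only [toDer_apply, smul_eq_mul, nsmul_eq_mul] at h
  rw [h]; ring

-- adjoinSF basics
lemma le_adjoinSF (F : Subfield E) (S : Set E) : F ≤ adjoinSF F S :=
  fun _ hx => Subfield.subset_closure (Or.inl hx)

lemma subset_adjoinSF (F : Subfield E) (S : Set E) : S ⊆ ↑(adjoinSF F S) :=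
  fun _ hx => Subfield.subset_closure (Or.inr hx)

lemma adjoinSF_le {F : Subfield E} {S : Set E} {L : Subfield E} (h1 : F ≤ L) (h2 : S ⊆ ↑L) :
    adjoinSF F S ≤ L :=
  Subfield.closure_le.mpr (Set.union_subset h1 h2)

lemma adjoinSF_mono {F F' : Subfield E} {S S' : Set E} (h1 : F ≤ F') (h2 : S ⊆ S') :
    adjoinSF F S ≤ adjoinSF F' S' :=
  adjoinSF_le (le_trans h1 (le_adjoinSF _ _)) (le_trans h2 (subset_adjoinSF _ _))

lemma adjoinSF_empty (F : Subfield E) : adjoinSF F (∅ : Set E) = F :=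
  le_antisymm (adjoinSF_le le_rfl (Set.empty_subset _)) (le_adjoinSF _ _)

lemma adjoinSF_adjoinSF (F : Subfield E) (S T : Set E) :
    adjoinSF (adjoinSF F S) T = adjoinSF F (S ∪ T) := by
  refine le_antisymm (adjoinSF_le (adjoinSF_le ?_ ?_) ?_) (adjoinSF_le ?_ ?_)
  · exact le_adjoinSF _ _
  · exact fun x hx => subset_adjoinSF _ _ (Or.inl hx)
  · exact fun x hx => subset_adjoinSF _ _ (Or.inr hx)
  · exact le_trans (le_adjoinSF F S) (le_adjoinSF _ _)
  · rintro x (hx | hx)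
    · exact le_adjoinSF _ _ (subset_adjoinSF F S hx)
    · exact subset_adjoinSF _ _ hx

lemma isDiffSubfield_adjoinSF (hD : IsDeriv D) {F : Subfield E} {S : Set E}
    (hF : IsDiffSubfield D F) (hS : ∀ s ∈ S, D s ∈ adjoinSF F S) :
    IsDiffSubfield D (adjoinSF F S) := by
  intro x hx
  induction hx using Subfield.closure_induction with
  | mem x hx =>
    rcases hx with hx | hx
    · exact le_adjoinSF F S (hF x hx)
    · exact hS x hx
  | one => rw [D_one hD]; exact zero_mem _
  | add x y hx hy px py => rw [hD.1 x y]; exact add_mem px py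
  | neg x hx px => rw [D_neg hD]; exact neg_mem px
  | inv x hx px =>
    rw [D_inv hD]
    exact mul_mem (neg_mem (pow_mem (inv_mem hx) 2)) px
  | mul x y hx hy px py =>
    rw [hD.2 x y]
    exact add_mem (mul_mem px hy) (mul_mem hx py)

section Delta

variable (hD : IsDeriv D) {M : Subfield E} (hM : IsDiffSubfield D M)

/-- The restriction of `D` to `M`, as an additive monoid hom. -/
def DM : ↥M →+ ↥M where
  toFun a := ⟨D ↑a, hM _ a.2⟩
  map_zero' := Subtype.ext (D_zero hD)
  map_add' a b := Subtype.ext (hD.1 _ _)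

@[simp] lemma DM_coe (a : ↥M) : ((DM hD hM a : ↥M) : E) = D ↑a := rfl

lemma DM_one : DM hD hM 1 = 0 := Subtype.ext (D_one hD)

/-- Coefficientwise application of `D` to a polynomial over `M`. -/
noncomputable def dmap (p : (↥M)[X]) : (↥M)[X] :=
  ⟨AddMonoidAlgebra.ofCoeff (Finsupp.mapRange (DM hD hM) (map_zero _) p.toFinsupp.coeff)⟩

@[simp] lemma coeff_dmap (p : (↥M)[X]) (n : ℕ) :
    (dmap hD hM p).coeff n = DM hD hM (p.coeff n) := rfl

/-- The extension of `D` to `M[X]` corresponding to a point `t` with `D t = τ ∈ M`. -/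
noncomputable def delta (τ : ↥M) (p : (↥M)[X]) : (↥M)[X] :=
  dmap hD hM p + C τ * derivative p

lemma coeff_delta (τ : ↥M) (p : (↥M)[X]) (n : ℕ) :
    (delta hD hM τ p).coeff n
      = DM hD hM (p.coeff n) + τ * (p.coeff (n + 1) * (n + 1)) := by
  simp [delta, coeff_derivative]

lemma delta_add (τ : ↥M) (p q : (↥M)[X]) :
    delta hD hM τ (p + q) = delta hD hM τ p + delta hD hM τ q := by
  ext n
  simp [coeff_delta, mul_add, add_mul]
  ring

lemma algebraMap_M (a : ↥M) : algebraMap ↥M E a = ↑a := rfl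

lemma aeval_delta {t : E} (τ : ↥M) (hτ : (τ : E) = D t) (p : (↥M)[X]) :
    aeval t (delta hD hM τ p) = D (aeval t p) := by
  induction p using Polynomial.induction_on' with
  | add p q hp hq =>
    rw [delta_add, map_add, map_add, hD.1, hp, hq]
  | monomial n a =>
    have hde : delta hD hM τ (monomial n a)
        = monomial n (DM hD hM a) + C τ * monomial (n - 1) (a * n) := by
      unfold delta
      rw [derivative_monomial]
      congr 1
      ext m
      simp [coeff_dmap, coeff_monomial]
      split <;> simp [D_zero hD]
    rw [hde, map_add, map_mul, aeval_C, aeval_monomial, aeval_monomial, aeval_monomial,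
      algebraMap_M, algebraMap_M, algebraMap_M, hτ]
    rw [hD.2]
    rw [D_pow hD]
    simp only [algebraMap_M, DM_coe]
    push_cast
    ring

lemma degree_delta_lt {τ : ↥M} {p : (↥M)[X]} (hp : p.Monic) :
    (delta hD hM τ p).degree < p.degree := by
  rw [degree_eq_natDegree hp.ne_zero]
  rw [Polynomial.degree_lt_iff_coeff_zero]
  intro m hm
  have hm' : p.natDegree ≤ m := by exact_mod_cast hm
  have h1 : p.coeff (m + 1) = 0 :=
    coeff_eq_zero_of_natDegree_lt (lt_of_le_of_lt hm' (Nat.lt_succ_self m))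
  rcases eq_or_lt_of_le hm' with h | h
  · rw [coeff_delta, h1, ← h, hp.coeff_natDegree, DM_one]
    simp
  · rw [coeff_delta, h1, coeff_eq_zero_of_natDegree_lt h]
    simp

end Delta

section Step

open Polynomial

lemma aeval_injective_of_transcendental {M : Subfield E} {t : E} (htr : Transcendental ↥M t) :
    ∀ p : (↥M)[X], aeval t p = 0 → p = 0 :=
  fun p hp => transcendental_iff.mp htr p hp

lemma mem_of_algebraic [CharZero E] (hD : IsDeriv D) {M : Subfield E} (hM : IsDiffSubfield D M)
    (hconst : ∀ x : E, D x = 0 → x ∈ M) {t : E} (ht : D t ∈ M)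
    (halg : IsAlgebraic ↥M t) : t ∈ M := by
  have hint : IsIntegral ↥M t := halg.isIntegral
  set p := minpoly ↥M t with hp
  have hmo : p.Monic := minpoly.monic hint
  have hd : 0 < p.natDegree := minpoly.natDegree_pos hint
  set τ : ↥M := ⟨D t, ht⟩ with hτdef
  have hτ : (τ : E) = D t := rfl
  have haev : aeval t (delta hD hM τ p) = 0 := by
    rw [aeval_delta hD hM τ hτ, minpoly.aeval, D_zero hD]
  have hdvd : p ∣ delta hD hM τ p := minpoly.dvd ↥M t haev
  have hδ0 : delta hD hM τ p = 0 :=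
    eq_zero_of_dvd_of_degree_lt hdvd (degree_delta_lt hD hM hmo)
  set e := p.natDegree - 1 with he
  have hee : e + 1 = p.natDegree := Nat.succ_pred_eq_of_pos hd
  have hc : (delta hD hM τ p).coeff e = 0 := by rw [hδ0]; simp
  rw [coeff_delta, hee, hmo.coeff_natDegree] at hc
  have hcE : D ((p.coeff e : E)) + D t * ((e : E) + 1) = 0 := by
    have := congrArg (fun x : ↥M => (x : E)) hc
    push_cast at this
    simpa [hτ] using this
  set a : E := (p.coeff e : E) with ha
  have hne : ((e : E) + 1) ≠ 0 := Nat.cast_add_one_ne_zero e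
  have hx : D (t + a / ((e : E) + 1)) = 0 := by
    have hdiv : D (a / ((e : E) + 1)) = D a / ((e : E) + 1) := by
      rw [div_eq_mul_inv, hD.2, D_inv hD]
      have : D ((e : E) + 1) = 0 := by
        have : ((e : E) + 1) = ((e + 1 : ℕ) : E) := by push_cast; ring
        rw [this, D_natCast hD]
      rw [this]
      ring
    rw [hD.1, hdiv]
    have h2 : D a = -(D t * ((e : E) + 1)) := by linear_combination hcE
    rw [h2]
    field_simp
    ring
  have hmem : t + a / ((e : E) + 1) ∈ M := hconst _ hx
  have haM : a / ((e : E) + 1) ∈ M := by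
    apply div_mem
    · exact (p.coeff e).2
    · exact add_mem (natCast_mem M e) (one_mem M)
  have := sub_mem hmem haM
  simpa using this

lemma mem_of_transcendental (hD : IsDeriv D) {M : Subfield E} (hM : IsDiffSubfield D M)
    (hconst : ∀ x : E, D x = 0 → x ∈ M) {t : E} (ht : D t ∈ M)
    (htr : Transcendental ↥M t) {u : E} (hu : u ≠ 0)
    (huM : u ∈ adjoinSF M {t}) (hw : D u / u ∈ M) : u ∈ M := by
  classical
  have hinj : ∀ q : (↥M)[X], aeval t q = 0 → q = 0 :=
    fun q hq => transcendental_iff.mp htr q hq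
  have haev_ne : ∀ q : (↥M)[X], q ≠ 0 → aeval t q ≠ 0 := fun q hq h => hq (hinj q h)
  -- get a representation u = P(t)/Q(t) with P, Q coprime and Q monic
  have hle : adjoinSF M {t} ≤ (IntermediateField.adjoin ↥M {t}).toSubfield := by
    apply adjoinSF_le
    · intro x hx
      exact (IntermediateField.adjoin ↥M {t}).algebraMap_mem ⟨x, hx⟩
    · intro x hx
      rw [Set.mem_singleton_iff] at hx
      rw [hx]
      show t ∈ (IntermediateField.adjoin ↥M {t}).toSubfield
      exact IntermediateField.mem_adjoin_simple_self ↥M t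
  obtain ⟨r, s, hrs⟩ := (IntermediateField.mem_adjoin_simple_iff ↥M u).mp (hle huM)
  have hs : s ≠ 0 := by
    rintro rfl
    rw [map_zero, div_zero] at hrs
    exact hu hrs
  obtain ⟨g, P0, Q0, A, B, hgne, hr', hs', hbez⟩ :
      ∃ g P0 Q0 A B : (↥M)[X], g ≠ 0 ∧ r = P0 * g ∧ s = Q0 * g ∧ g = r * A + s * B := by
    obtain ⟨P0, hP0⟩ := EuclideanDomain.gcd_dvd_left r s
    obtain ⟨Q0, hQ0⟩ := EuclideanDomain.gcd_dvd_right r s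
    exact ⟨EuclideanDomain.gcd r s, P0, Q0, EuclideanDomain.gcdA r s,
      EuclideanDomain.gcdB r s, fun h => hs (EuclideanDomain.gcd_eq_zero_iff.mp h).2,
      hP0.trans (mul_comm _ _), hQ0.trans (mul_comm _ _), EuclideanDomain.gcd_eq_gcd_ab r s⟩
  have hco0 : IsCoprime P0 Q0 := by
    refine ⟨A, B, ?_⟩
    apply mul_left_cancel₀ hgne
    rw [mul_one]
    have hstep : g * (A * P0 + B * Q0) = r * A + s * B := by
      rw [hr', hs']; ring
    rw [hstep]
    exact hbez.symm
  have hQ0 : Q0 ≠ 0 := by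
    rintro rfl
    rw [zero_mul] at hs'
    exact hs hs'
  have hu0 : u = aeval t P0 / aeval t Q0 := by
    rw [hrs, hr', hs', map_mul, map_mul, mul_div_mul_right _ _ (haev_ne g hgne)]
  set c := Q0.leadingCoeff with hc
  have hcne : c ≠ 0 := leadingCoeff_ne_zero.mpr hQ0
  set P := P0 * C c⁻¹ with hPdef
  set Q := Q0 * C c⁻¹ with hQdef
  have hQmo : Q.Monic := monic_mul_leadingCoeff_inv hQ0
  have hCcinv : (C (c : ↥M)) * C c⁻¹ = 1 := by
    rw [← C_mul, mul_inv_cancel₀ hcne, C_1]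
  have hco : IsCoprime P Q := by
    obtain ⟨a, b, hab⟩ := hco0
    refine ⟨a * C c, b * C c, ?_⟩
    calc a * C c * P + b * C c * Q = (a * P0 + b * Q0) * (C c * C c⁻¹) := by
          rw [hPdef, hQdef]; ring
      _ = 1 := by rw [hCcinv, mul_one, hab]
  have hcinvne : aeval t (C (c⁻¹ : ↥M)) ≠ 0 := by
    apply haev_ne
    simp only [ne_eq, C_eq_zero]
    exact inv_ne_zero hcne
  have huPQ : u = aeval t P / aeval t Q := by
    rw [hu0, hPdef, hQdef, map_mul, map_mul, mul_div_mul_right _ _ hcinvne]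
  clear_value c P Q
  set Pt := aeval t P with hPt'
  set Qt := aeval t Q with hQt'
  clear_value Pt Qt
  have hQt : Qt ≠ 0 := by rw [hQt']; exact haev_ne Q hQmo.ne_zero
  have hPt : Pt ≠ 0 := by
    intro h
    apply hu
    rw [huPQ, h, zero_div]
  have hPne : P ≠ 0 := by
    intro h
    apply hPt
    rw [hPt', h, map_zero]
  set w := D u / u with hwdef
  have hDu : D u = w * u := by rw [hwdef]; exact (div_mul_cancel₀ (D u) hu).symm
  clear_value w
  set w' : ↥M := ⟨w, hw⟩ with hw'def
  set τ : ↥M := ⟨D t, ht⟩ with hτdef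
  have hτ : (τ : E) = D t := rfl
  have hPtu : Pt = u * Qt := by
    rw [huPQ]
    field_simp
  have key : D Pt * Qt - Pt * D Qt = w * (Pt * Qt) := by
    have h1 : D Pt = D u * Qt + u * D Qt := by rw [hPtu]; exact hD.2 u Qt
    rw [h1, hDu, hPtu]
    ring
  have heq : delta hD hM τ P * Q - P * delta hD hM τ Q = C w' * (P * Q) := by
    apply sub_eq_zero.mp
    apply hinj
    simp only [map_sub, map_mul, aeval_delta hD hM τ hτ, aeval_C, algebraMap_M]
    rw [← hPt', ← hQt']
    linear_combination key
  have hdvd : Q ∣ delta hD hM τ Q := by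
    apply hco.symm.dvd_of_dvd_mul_right
    exact ⟨delta hD hM τ P - C w' * P, by linear_combination -heq⟩
  have hδQ : delta hD hM τ Q = 0 :=
    eq_zero_of_dvd_of_degree_lt hdvd (degree_delta_lt hD hM hQmo)
  have hDQt : D Qt = 0 := by
    rw [hQt', ← aeval_delta hD hM τ hτ Q, hδQ, map_zero]
  have hQtM : Qt ∈ M := hconst Qt hDQt
  have hQC : Q = C (⟨Qt, hQtM⟩ : ↥M) := by
    apply sub_eq_zero.mp
    apply hinj
    rw [map_sub, aeval_C, algebraMap_M, ← hQt']
    exact sub_self Qt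
  have hQ1 : Q = 1 := by
    have h3 : (C (⟨Qt, hQtM⟩ : ↥M)).leadingCoeff = 1 := by rw [← hQC]; exact hQmo
    rw [leadingCoeff_C] at h3
    rw [hQC, h3, C_1]
  have hQt1 : Qt = 1 := by rw [hQt', hQ1, map_one]
  have huP : u = Pt := by rw [huPQ, hQt1, div_one]
  have hδP : delta hD hM τ P = C w' * P := by
    have h4 := heq
    rw [hδQ, hQ1] at h4
    simpa using h4
  set d := P.natDegree with hd
  have hP1 : P.coeff (d + 1) = 0 := coeff_eq_zero_of_natDegree_lt (lt_add_one d)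
  have hcoeff : DM hD hM (P.coeff d) = w' * P.coeff d := by
    have h5 := congrArg (fun q : (↥M)[X] => q.coeff d) hδP
    simp only [coeff_C_mul] at h5
    rw [coeff_delta, hP1] at h5
    simpa using h5
  set v : E := ↑(P.coeff d) with hv
  have hvM : v ∈ M := (P.coeff d).2
  have hvne : v ≠ 0 := by
    simp only [hv, ne_eq, ZeroMemClass.coe_eq_zero]
    exact fun h => hPne (leadingCoeff_eq_zero.mp h)
  have hDv : D v = w * v := by
    have := congrArg (fun x : ↥M => (x : E)) hcoeff
    simpa using this
  have hDuv : D (u / v) = 0 := by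
    rw [div_eq_mul_inv, hD.2, D_inv hD, hDu, hDv]
    field_simp
    ring
  have h6 : u / v ∈ M := hconst _ hDuv
  have h7 := mul_mem h6 hvM
  rwa [div_mul_cancel₀ u hvne] at h7

/-- One-step lemma: adjoining a single antiderivative. -/
lemma step [CharZero E] (hD : IsDeriv D) {M : Subfield E} (hM : IsDiffSubfield D M)
    (hconst : ∀ x : E, D x = 0 → x ∈ M) {t : E} (ht : D t ∈ M)
    {u : E} (hu : u ≠ 0) (huM : u ∈ adjoinSF M {t}) (hw : D u / u ∈ M) : u ∈ M := by
  by_cases halg : IsAlgebraic ↥M t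
  · have htM : t ∈ M := mem_of_algebraic hD hM hconst ht halg
    exact adjoinSF_le le_rfl (Set.singleton_subset_iff.mpr htM) huM
  · exact mem_of_transcendental hD hM hconst ht halg hu huM hw

end Step

lemma main [CharZero E] (hD : IsDeriv D) :
    ∀ (n : ℕ) (M : Subfield E), IsDiffSubfield D M → (∀ x : E, D x = 0 → x ∈ M) →
      ∀ ζ : Fin n → E, (∀ i, D (ζ i) ∈ adjoinSF M (ζ '' {j | j < i})) →
      ∀ u : E, u ≠ 0 → u ∈ adjoinSF M (Set.range ζ) → D u / u ∈ M → u ∈ M := by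
  intro n
  induction n with
  | zero =>
    intro M hM hconst ζ hζ u hu huM hw
    rw [Set.range_eq_empty, adjoinSF_empty] at huM
    exact huM
  | succ n ih =>
    intro M hM hconst ζ hζ u hu huM hw
    set t := ζ 0 with htdef
    have ht : D t ∈ M := by
      have h0 := hζ 0
      have hempty : (ζ '' {j | j < 0}) = ∅ := by
        have h1 : {j : Fin (n+1) | j < 0} = ∅ := by
          ext j; simp
        rw [h1, Set.image_empty]
      rw [hempty, adjoinSF_empty] at h0
      exact h0
    set M' := adjoinSF M {t} with hM'def
    have hM'le : M ≤ M' := le_adjoinSF _ _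
    have hM' : IsDiffSubfield D M' :=
      isDiffSubfield_adjoinSF hD hM
        (fun s hs => by rw [Set.mem_singleton_iff] at hs; rw [hs]; exact hM'le ht)
    have hconst' : ∀ x : E, D x = 0 → x ∈ M' := fun x hx => hM'le (hconst x hx)
    set ζ' := Fin.tail ζ with hζ'def
    have hrange : Set.range ζ = {t} ∪ Set.range ζ' := by
      conv_lhs => rw [← Fin.cons_self_tail ζ]
      rw [Fin.range_cons, Set.insert_eq, hζ'def]
    have hadj : adjoinSF M (Set.range ζ) = adjoinSF M' (Set.range ζ') := by
      rw [hrange, hM'def, adjoinSF_adjoinSF]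
    have hζ'prop : ∀ i : Fin n, D (ζ' i) ∈ adjoinSF M' (ζ' '' {j | j < i}) := by
      intro i
      have h1 := hζ i.succ
      have hsub : ζ '' {j | j < i.succ} ⊆ {t} ∪ ζ' '' {j | j < i} := by
        rintro x ⟨j, hj, rfl⟩
        rcases Fin.eq_zero_or_eq_succ j with rfl | ⟨k, rfl⟩
        · exact Or.inl rfl
        · exact Or.inr ⟨k, Fin.succ_lt_succ_iff.mp hj, rfl⟩
      have h2 : adjoinSF M (ζ '' {j | j < i.succ}) ≤ adjoinSF M' (ζ' '' {j | j < i}) := by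
        rw [hM'def, adjoinSF_adjoinSF]
        exact adjoinSF_mono le_rfl hsub
      exact h2 h1
    have huM' : u ∈ adjoinSF M' (Set.range ζ') := by rw [← hadj]; exact huM
    have hu'M : u ∈ M' := ih M' hM' hconst' ζ' hζ'prop u hu huM' (hM'le hw)
    rw [hM'def] at hu'M
    exact step hD hM hconst ht hu hu'M hw

end S4

/-- if `E` (the ambient field, `⊤`) is an iterated antiderivative
extension of `F`, `K ⊇ F` is a differential subfield and `u ∈ E` is nonzero with
`u'/u ∈ K`, then `u ∈ K`. -/
theorem statement4 {E : Type*} [Field E] [CharZero E] (D : E → E) (hD : IsDeriv D)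
    (F K : Subfield E)
    (hF : IsDiffSubfield D F) (hK : IsDiffSubfield D K)
    (hIAE : IsIAE D F ⊤) (hFK : F ≤ K)
    (u : E) (hu : u ≠ 0) (hlog : D u / u ∈ K) :
    u ∈ K := by
  obtain ⟨⟨hFtop, hconstF⟩, n, ζ, hζ, htop⟩ := hIAE
  have hconstK : ∀ x : E, D x = 0 → x ∈ K :=
    fun x hx => hFK (hconstF x (Subfield.mem_top x) hx)
  have hζK : ∀ i, D (ζ i) ∈ adjoinSF K (ζ '' {j | j < i}) :=
    fun i => S4.adjoinSF_mono hFK subset_rfl (hζ i)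
  have huK : u ∈ adjoinSF K (Set.range ζ) := by
    have h1 : (⊤ : Subfield E) ≤ adjoinSF K (Set.range ζ) := by
      rw [htop]
      exact S4.adjoinSF_mono hFK subset_rfl
    exact h1 (Subfield.mem_top u)
  exact S4.main hD n K hK hconstK ζ hζK u hu huK hlog
end

section
/- Let F be a differential field of characteristic zero with field of constants C, and let E ⊇ F be a no new constants extension. Let ζ₁,…,ζₙ ∈ E be antiderivatives of F. Then either ζ₁,…,ζₙ are algebraically independent over F, or there exists a tuple (α₁,…,αₙ) ∈ Cⁿ ∖ {0} such that Σᵢ₌₁ⁿ αᵢζᵢ ∈ F. -/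
namespace S6
open MvPolynomial

variable {E : Type*} [Field E] {n : ℕ} {D : E → E}

/-- degree of a monomial -/
def mdeg (m : Fin n →₀ ℕ) : ℕ := m.sum fun _ e => e

lemma mdeg_add (m m' : Fin n →₀ ℕ) : mdeg (m + m') = mdeg m + mdeg m' :=
  Finsupp.sum_add_index' (fun _ => rfl) (fun _ _ _ => rfl)

lemma mdeg_single (i : Fin n) : mdeg (Finsupp.single i 1) = 1 :=
  Finsupp.sum_single_index rfl

lemma sum_support_eq_mdeg (m : Fin n →₀ ℕ) : ∑ x ∈ m.support, m x = mdeg m := rfl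

lemma mdeg_eq_zero {m : Fin n →₀ ℕ} (h : mdeg m = 0) : m = 0 := by
  ext i
  simp only [Finsupp.coe_zero, Pi.zero_apply]
  by_cases hi : i ∈ m.support
  · have h1 : m i ≤ ∑ x ∈ m.support, m x :=
      Finset.single_le_sum (f := fun i => m i) (fun _ _ => Nat.zero_le _) hi
    rw [sum_support_eq_mdeg] at h1
    omega
  · exact Finsupp.notMem_support_iff.mp hi

lemma mdeg_eq_one {m : Fin n →₀ ℕ} (h : mdeg m = 1) : ∃ i, m = Finsupp.single i 1 := by
  obtain ⟨i, hi⟩ : m.support.Nonempty := by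
    rw [Finsupp.support_nonempty_iff]
    rintro rfl
    simp [mdeg] at h
  refine ⟨i, ?_⟩
  have h1 : m i ≤ mdeg m := by
    have := Finset.single_le_sum (f := fun i => m i) (fun _ _ => Nat.zero_le _) hi
    rwa [sum_support_eq_mdeg] at this
  have hmi : m i = 1 := by
    have := Finsupp.mem_support_iff.mp hi
    omega
  have hs : m.support = {i} := by
    apply Finset.eq_singleton_iff_unique_mem.mpr
    refine ⟨hi, fun j hj => ?_⟩
    by_contra hji
    have : m i + m j ≤ mdeg m := by
      have e1 : m i + ∑ x ∈ m.support.erase i, m x = ∑ x ∈ m.support, m x :=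
        Finset.add_sum_erase _ (fun i => m i) hi
      have hj' : j ∈ m.support.erase i := Finset.mem_erase.mpr ⟨hji, hj⟩
      have e2 : m j ≤ ∑ x ∈ m.support.erase i, m x :=
        Finset.single_le_sum (f := fun i => m i) (fun _ _ => Nat.zero_le _) hj'
      have e3 := sum_support_eq_mdeg m
      omega
    have := Finsupp.mem_support_iff.mp hj
    omega
  have := (Finsupp.support_eq_singleton.mp hs).2
  rwa [hmi] at this

lemma mdeg_le_totalDegree {p : MvPolynomial (Fin n) E} {m : Fin n →₀ ℕ}
    (h : m ∈ p.support) : mdeg m ≤ p.totalDegree := le_totalDegree h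


lemma D0 (hD : IsDeriv D) : D 0 = 0 := by
  have h := hD.1 0 0
  simp only [add_zero] at h
  exact left_eq_add.mp h

lemma D1 (hD : IsDeriv D) : D 1 = 0 := by
  have h := hD.2 1 1
  simp only [mul_one, one_mul] at h
  exact left_eq_add.mp h

lemma Dnat (hD : IsDeriv D) (k : ℕ) : D (k : E) = 0 := by
  induction k with
  | zero => exact_mod_cast D0 hD
  | succ k ih => push_cast; rw [hD.1, ih, D1 hD, add_zero]

lemma Dmul_nat (hD : IsDeriv D) (x : E) (k : ℕ) : D (x * (k : E)) = D x * (k : E) := by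
  rw [hD.2, Dnat hD, mul_zero, add_zero]

/-- Apply `D` to each coefficient. -/
noncomputable def PD (hD : IsDeriv D) (p : MvPolynomial (Fin n) E) : MvPolynomial (Fin n) E :=
  AddMonoidAlgebra.ofCoeff (Finsupp.mapRange D (D0 hD) (AddMonoidAlgebra.coeff p))

lemma coeff_PD (hD : IsDeriv D) (p : MvPolynomial (Fin n) E) (m : Fin n →₀ ℕ) :
    coeff m (PD hD p) = D (coeff m p) := rfl

lemma PD_add (hD : IsDeriv D) (p q : MvPolynomial (Fin n) E) :
    PD hD (p + q) = PD hD p + PD hD q := by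
  apply MvPolynomial.ext; intro m
  simp only [coeff_PD, coeff_add, hD.1]

lemma PD_C (hD : IsDeriv D) (a : E) : PD hD (C a : MvPolynomial (Fin n) E) = C (D a) := by
  apply MvPolynomial.ext; intro m
  simp only [coeff_PD, coeff_C]
  split_ifs
  · rfl
  · exact D0 hD

lemma PD_mul_X (hD : IsDeriv D) (p : MvPolynomial (Fin n) E) (i : Fin n) :
    PD hD (p * X i) = PD hD p * X i := by
  classical
  apply MvPolynomial.ext; intro m
  rw [coeff_PD, coeff_mul_X', coeff_mul_X']
  split_ifs
  · rfl
  · exact D0 hD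

lemma coeff_pderiv (i : Fin n) (m : Fin n →₀ ℕ) (p : MvPolynomial (Fin n) E) :
    coeff m (pderiv i p) =
      coeff (m + Finsupp.single i 1) p * ((m i : E) + 1) := by
  induction p using MvPolynomial.induction_on' with
  | monomial s a =>
    rw [pderiv_monomial]
    simp only [coeff_monomial]
    by_cases h : s = m + Finsupp.single i 1
    · have h1 : s - Finsupp.single i 1 = m := by rw [h, add_tsub_cancel_right]
      have h2 : s i = m i + 1 := by
        rw [h, Finsupp.add_apply, Finsupp.single_eq_same]
      rw [if_pos h1, if_pos h, h2]
      push_cast; ring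
    · rw [if_neg h, zero_mul]
      by_cases h1 : s - Finsupp.single i 1 = m
      · rw [if_pos h1]
        by_cases h2 : s i = 0
        · rw [h2]; simp
        · exfalso
          apply h
          rw [← h1, tsub_add_cancel_of_le]
          exact Finsupp.single_le_iff.mpr (Nat.one_le_iff_ne_zero.mpr h2)
      · rw [if_neg h1]
  | add p q hp hq =>
    simp only [map_add, coeff_add, hp, hq, add_mul]

lemma pderiv_comm (i j : Fin n) (p : MvPolynomial (Fin n) E) :
    pderiv i (pderiv j p) = pderiv j (pderiv i p) := by
  apply MvPolynomial.ext; intro m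
  rw [coeff_pderiv, coeff_pderiv, coeff_pderiv, coeff_pderiv]
  rw [add_right_comm]
  by_cases hij : i = j
  · subst hij; ring
  · rw [Finsupp.add_apply, Finsupp.add_apply,
      Finsupp.single_apply, Finsupp.single_apply, if_neg hij, if_neg (Ne.symm hij)]
    push_cast
    ring

lemma PD_pderiv (hD : IsDeriv D) (i : Fin n) (p : MvPolynomial (Fin n) E) :
    pderiv i (PD hD p) = PD hD (pderiv i p) := by
  apply MvPolynomial.ext; intro m
  rw [coeff_pderiv, coeff_PD, coeff_PD, coeff_pderiv]
  rw [show ((m i : E) + 1) = ((m i + 1 : ℕ) : E) by push_cast; ring]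
  rw [Dmul_nat hD]

/-- Chain rule. -/
lemma D_eval (hD : IsDeriv D) (ζ : Fin n → E) (p : MvPolynomial (Fin n) E) :
    D (eval ζ p) = eval ζ (PD hD p) + ∑ j, D (ζ j) * eval ζ (pderiv j p) := by
  induction p using MvPolynomial.induction_on with
  | C a =>
    simp only [eval_C, PD_C, map_zero, pderiv_C, eval_zero, mul_zero, Finset.sum_const_zero,
      add_zero]
  | add p q hp hq =>
    simp only [map_add, PD_add, hD.1, hp, hq, mul_add, Finset.sum_add_distrib]
    ring
  | mul_X p i hp =>
    rw [map_mul, eval_X, hD.2, PD_mul_X, map_mul, eval_X]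
    have hpd : ∀ j, eval ζ (pderiv j (p * X i)) =
        eval ζ (pderiv j p) * ζ i + eval ζ p * (if i = j then 1 else 0) := by
      intro j
      classical
      rw [pderiv_mul, map_add, map_mul, map_mul, eval_X, pderiv_X]
      congr 1
      by_cases h : i = j
      · subst h; simp [Pi.single_eq_same]
      · simp [Pi.single_eq_of_ne (Ne.symm h), h]
    simp only [hpd, mul_add, Finset.sum_add_distrib, mul_ite, mul_one, mul_zero]
    rw [Finset.sum_ite_eq ]
    simp only [Finset.mem_univ, if_true]
    rw [hp, add_mul, Finset.sum_mul]
    simp only [mul_assoc]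
    ring



variable (ζ : Fin n → E)

/-- The polynomial whose evaluation computes `D (eval ζ p)`. -/
noncomputable def Qp (hD : IsDeriv D) (p : MvPolynomial (Fin n) E) : MvPolynomial (Fin n) E :=
  PD hD p + ∑ j, C (D (ζ j)) * pderiv j p

lemma eval_Qp (hD : IsDeriv D) (p : MvPolynomial (Fin n) E) :
    eval ζ (Qp ζ hD p) = D (eval ζ p) := by
  rw [Qp, map_add, map_sum, D_eval hD ζ p]
  simp only [map_mul, eval_C]

lemma coeff_Qp (hD : IsDeriv D) (p : MvPolynomial (Fin n) E) (m : Fin n →₀ ℕ) :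
    coeff m (Qp ζ hD p) = D (coeff m p) + ∑ j, D (ζ j) * coeff m (pderiv j p) := by
  rw [Qp, coeff_add, coeff_PD, coeff_sum]
  simp only [coeff_C_mul]

lemma pderiv_Qp (hD : IsDeriv D) (p : MvPolynomial (Fin n) E) (i : Fin n) :
    pderiv i (Qp ζ hD p) = Qp ζ hD (pderiv i p) := by
  rw [Qp, Qp, map_add, map_sum]
  rw [PD_pderiv hD]
  congr 1
  refine Finset.sum_congr rfl fun j _ => ?_
  rw [pderiv_C_mul, pderiv_comm]

lemma coeff_pderiv_eq_zero (p : MvPolynomial (Fin n) E) (i : Fin n) (m : Fin n →₀ ℕ)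
    (h : p.totalDegree ≤ mdeg m) : coeff m (pderiv i p) = 0 := by
  rw [coeff_pderiv]
  have hz : coeff (m + Finsupp.single i 1) p = 0 := by
    apply coeff_eq_zero_of_totalDegree_lt
    rw [sum_support_eq_mdeg, mdeg_add, mdeg_single]
    omega
  rw [hz, zero_mul]

lemma coeff_Qp_eq_zero (hD : IsDeriv D) (p : MvPolynomial (Fin n) E) (m : Fin n →₀ ℕ)
    (h : p.totalDegree < mdeg m) : coeff m (Qp ζ hD p) = 0 := by
  rw [coeff_Qp]
  have h1 : coeff m p = 0 := by
    apply coeff_eq_zero_of_totalDegree_lt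
    rw [sum_support_eq_mdeg]
    exact h
  rw [h1, D0 hD, zero_add]
  refine Finset.sum_eq_zero fun j _ => ?_
  rw [coeff_pderiv_eq_zero _ _ _ h.le, mul_zero]

lemma totalDegree_Qp_le (hD : IsDeriv D) (p : MvPolynomial (Fin n) E) :
    (Qp ζ hD p).totalDegree ≤ p.totalDegree := by
  apply Finset.sup_le
  intro m hm
  by_contra h
  rw [MvPolynomial.mem_support_iff] at hm
  have hmd : mdeg m = m.sum fun _ e => e := rfl
  exact hm (coeff_Qp_eq_zero ζ hD p m (by omega))

lemma coeff_pderiv_mem {F : Subfield E} {p : MvPolynomial (Fin n) E}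
    (h : ∀ m, coeff m p ∈ F) (i : Fin n) (m : Fin n →₀ ℕ) : coeff m (pderiv i p) ∈ F := by
  rw [coeff_pderiv]
  exact F.mul_mem (h _) (F.add_mem (natCast_mem F _) F.one_mem)

lemma coeff_Qp_mem {F : Subfield E} (hD : IsDeriv D) (hF : IsDiffSubfield D F)
    (hζ : ∀ j, D (ζ j) ∈ F) {p : MvPolynomial (Fin n) E}
    (h : ∀ m, coeff m p ∈ F) (m : Fin n →₀ ℕ) : coeff m (Qp ζ hD p) ∈ F := by
  rw [coeff_Qp]
  exact F.add_mem (hF _ (h m)) (Subfield.sum_mem F fun j _ =>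
    F.mul_mem (hζ j) (coeff_pderiv_mem h j m))

lemma rep_of_totalDegree_le_one {p : MvPolynomial (Fin n) E} (h : p.totalDegree ≤ 1) :
    p = C (coeff 0 p) + ∑ i, C (coeff (Finsupp.single i 1) p) * X i := by
  classical
  apply MvPolynomial.ext; intro m
  rw [coeff_add, coeff_C, coeff_sum]
  simp only [coeff_C_mul, coeff_X', mul_ite, mul_one, mul_zero]
  rcases Nat.lt_or_ge (mdeg m) 2 with hm | hm
  · interval_cases hmd : mdeg m
    · have h0 : m = 0 := mdeg_eq_zero hmd
      subst h0
      rw [if_pos rfl, Finset.sum_eq_zero, add_zero]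
      intro i _
      rw [if_neg]
      intro hc
      have := mdeg_single i
      rw [hc] at this
      simp [mdeg] at this
    · obtain ⟨i0, rfl⟩ := mdeg_eq_one hmd
      rw [if_neg, zero_add, Finset.sum_eq_single i0]
      · rw [if_pos rfl]
      · intro j _ hj
        rw [if_neg]
        intro hc
        rcases (Finsupp.single_eq_single_iff _ _ _ _).mp hc with ⟨h1, _⟩ | ⟨h1, _⟩
        · exact hj h1
        · exact one_ne_zero h1
      · intro hc
        exact absurd (Finset.mem_univ i0) hc
      · intro hc
        have := mdeg_single i0
        rw [← hc] at this
        simp [mdeg] at this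
  · rw [coeff_eq_zero_of_totalDegree_lt (by rw [sum_support_eq_mdeg]; omega)]
    rw [if_neg, Finset.sum_eq_zero, add_zero]
    · intro i _
      rw [if_neg]
      intro hc
      have := mdeg_single i
      rw [hc] at this
      omega
    · rintro rfl
      simp [mdeg] at hm

lemma eval_of_totalDegree_le_one {p : MvPolynomial (Fin n) E} (h : p.totalDegree ≤ 1) :
    eval ζ p = coeff 0 p + ∑ i, coeff (Finsupp.single i 1) p * ζ i := by
  conv_lhs => rw [rep_of_totalDegree_le_one h]
  simp [eval_C, eval_X]


lemma top_monomial {p : MvPolynomial (Fin n) E} (hp : p ≠ 0) :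
    ∃ m ∈ p.support, mdeg m = p.totalDegree := by
  obtain ⟨b, hb, he⟩ := p.support.exists_mem_eq_sup
    (Finset.nonempty_iff_ne_empty.mpr fun h => hp (MvPolynomial.support_eq_empty.mp h)) fun m => m.sum fun _ e => e
  exact ⟨b, hb, he.symm⟩

lemma main_ind [CharZero E] {F : Subfield E} (hD : IsDeriv D) (hF : IsDiffSubfield D F)
    (hNNC : ∀ x : E, D x = 0 → x ∈ F) (hζ : ∀ j, D (ζ j) ∈ F) :
    ∀ d (p : MvPolynomial (Fin n) E), p.totalDegree = d → p ≠ 0 →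
      (∀ m, coeff m p ∈ F) → Qp ζ hD p = 0 → 1 ≤ d →
      ∃ α : Fin n → E, (∀ i, α i ∈ F ∧ D (α i) = 0) ∧ α ≠ 0 ∧ (∑ i, α i * ζ i) ∈ F := by
  intro d
  induction d using Nat.strong_induction_on with
  | _ d IH =>
  intro p hpd hp0 hpF hQ hd1
  rcases Nat.lt_or_ge d 2 with hd2 | hd2
  · -- base case : d = 1
    have hd : d = 1 := by omega
    subst hd
    have hDb : ∀ i, D (coeff (Finsupp.single i 1) p) = 0 := by
      intro i
      have h0 : coeff (Finsupp.single i 1) (Qp ζ hD p) = 0 := by rw [hQ, coeff_zero]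
      rw [coeff_Qp, Finset.sum_eq_zero, add_zero] at h0
      · exact h0
      · intro j _
        rw [coeff_pderiv_eq_zero _ _ _ (by rw [hpd, mdeg_single]), mul_zero]
    have hev : eval ζ p ∈ F := by
      apply hNNC
      rw [← eval_Qp ζ hD p, hQ, map_zero]
    obtain ⟨m0, hm0s, hm0d⟩ := top_monomial hp0
    rw [hpd] at hm0d
    obtain ⟨i0, rfl⟩ := mdeg_eq_one hm0d
    refine ⟨fun i => coeff (Finsupp.single i 1) p,
      fun i => ⟨hpF _, hDb i⟩, ?_, ?_⟩
    · intro hc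
      have := congrFun hc i0
      simp only [Pi.zero_apply] at this
      exact (MvPolynomial.mem_support_iff.mp hm0s) this
    · have := eval_of_totalDegree_le_one ζ (le_of_eq hpd)
      have hsum : (∑ i, coeff (Finsupp.single i 1) p * ζ i) = eval ζ p - coeff 0 p := by
        rw [this]; ring
      rw [hsum]
      exact F.sub_mem hev (hpF 0)
  · -- inductive step : d ≥ 2
    obtain ⟨m0, hm0s, hm0d⟩ := top_monomial hp0
    rw [hpd] at hm0d
    have hm0ne : m0 ≠ 0 := by
      intro hc
      rw [hc] at hm0d
      simp [mdeg] at hm0d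
      omega
    obtain ⟨i0, hi0⟩ := Finsupp.support_nonempty_iff.mpr hm0ne
    have hi0' : m0 i0 ≠ 0 := Finsupp.mem_support_iff.mp hi0
    set q := pderiv i0 p with hq
    set m1 := m0 - Finsupp.single i0 1 with hm1
    have hle : Finsupp.single i0 1 ≤ m0 :=
      Finsupp.single_le_iff.mpr (Nat.one_le_iff_ne_zero.mpr hi0')
    have hm1add : m1 + Finsupp.single i0 1 = m0 := tsub_add_cancel_of_le hle
    have hcq : coeff m1 q ≠ 0 := by
      rw [hq, coeff_pderiv, hm1add]
      apply mul_ne_zero (MvPolynomial.mem_support_iff.mp hm0s)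
      exact_mod_cast Nat.cast_add_one_ne_zero (R := E) (m1 i0)
    have hq0 : q ≠ 0 := fun hc => hcq (by rw [hc, coeff_zero])
    have hm1d : mdeg m1 + 1 = d := by
      have := mdeg_add m1 (Finsupp.single i0 1)
      rw [hm1add, mdeg_single] at this
      omega
    have hqd : q.totalDegree = d - 1 := by
      apply le_antisymm
      · apply Finset.sup_le
        intro m hm
        rw [MvPolynomial.mem_support_iff] at hm
        have hmd : mdeg m = m.sum fun _ e => e := rfl
        by_contra hcon
        exact hm (coeff_pderiv_eq_zero _ _ _ (by omega))
      · have := mdeg_le_totalDegree (MvPolynomial.mem_support_iff.mpr hcq)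
        omega
    refine IH (d - 1) (by omega) q hqd hq0 (fun m => coeff_pderiv_mem hpF i0 m) ?_ (by omega)
    rw [hq, ← pderiv_Qp, hQ, map_zero]


lemma support_C_mul {c : E} (hc : c ≠ 0) (p : MvPolynomial (Fin n) E) :
    (C c * p).support = p.support := by
  ext m
  simp only [MvPolynomial.mem_support_iff, coeff_C_mul]
  exact ⟨fun h => fun h0 => h (by rw [h0, mul_zero]), fun h => mul_ne_zero hc h⟩

end S6

open MvPolynomial in
/-- Ostrowski-type theorem: `E` (the ambient field) is a no new
constants extension of `F` and `ζ₁,…,ζₙ ∈ E` are antiderivatives of `F`. Then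
either the `ζᵢ` are algebraically independent over `F`, or some nontrivial
`C`-linear combination of them lies in `F`, where `C` is the field of constants. -/
theorem statement6 {E : Type*} [Field E] [CharZero E] (D : E → E) (hD : IsDeriv D)
    (F : Subfield E) (hF : IsDiffSubfield D F)
    (hNNC : ∀ x : E, D x = 0 → x ∈ F)  -- E is a no new constants extension of F
    (n : ℕ) (ζ : Fin n → E) (hζ : ∀ i, D (ζ i) ∈ F) :
    AlgebraicIndependent F ζ ∨
      ∃ α : Fin n → E, (∀ i, α i ∈ F ∧ D (α i) = 0) ∧ α ≠ 0 ∧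
        (∑ i, α i * ζ i) ∈ F := by
  classical
  by_cases halg : AlgebraicIndependent F ζ
  · exact Or.inl halg
  right
  -- extract a nonzero relation with coefficients in F
  have hrel : ∃ p : MvPolynomial (Fin n) E,
      p ≠ 0 ∧ (∀ m, coeff m p ∈ F) ∧ eval ζ p = 0 := by
    rw [AlgebraicIndependent] at halg
    have : ∃ p : MvPolynomial (Fin n) F, p ≠ 0 ∧ aeval ζ p = 0 := by
      by_contra hc
      push_neg at hc
      exact halg ((injective_iff_map_eq_zero _).mpr fun p hp => by
        by_contra h0
        exact (hc p h0) hp)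
    obtain ⟨p, hp0, hpe⟩ := this
    refine ⟨p.map (algebraMap F E), ?_, ?_, ?_⟩
    · intro hc
      exact hp0 (MvPolynomial.map_injective _ (RingHom.injective _) (by rw [hc, map_zero]))
    · intro m
      rw [MvPolynomial.coeff_map]
      exact SetLike.coe_mem _
    · rw [MvPolynomial.eval_map, ← MvPolynomial.aeval_def, hpe]
  -- the set of relations
  set S : MvPolynomial (Fin n) E → Prop :=
    fun p => p ≠ 0 ∧ (∀ m, coeff m p ∈ F) ∧ eval ζ p = 0 with hS
  have hA : {k : ℕ | ∃ p, S p ∧ p.totalDegree = k}.Nonempty := by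
    obtain ⟨p, hp⟩ := hrel
    exact ⟨p.totalDegree, p, hp, rfl⟩
  set d : ℕ := sInf {k : ℕ | ∃ p, S p ∧ p.totalDegree = k} with hd
  obtain ⟨P₁, hP₁S, hP₁d⟩ : ∃ p, S p ∧ p.totalDegree = d := Nat.sInf_mem hA
  have hdmin : ∀ p, S p → d ≤ p.totalDegree := fun p hp =>
    Nat.sInf_le ⟨p, hp, rfl⟩
  -- second minimization : number of top monomials
  set tc : MvPolynomial (Fin n) E → ℕ :=
    fun p => (p.support.filter fun m => S6.mdeg m = d).card with htc
  have hB : {k : ℕ | ∃ p, S p ∧ p.totalDegree = d ∧ tc p = k}.Nonempty :=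
    ⟨tc P₁, P₁, hP₁S, hP₁d, rfl⟩
  obtain ⟨P, hPS, hPd, hPt⟩ : ∃ p, S p ∧ p.totalDegree = d ∧
      tc p = sInf {k : ℕ | ∃ p, S p ∧ p.totalDegree = d ∧ tc p = k} := Nat.sInf_mem hB
  set t : ℕ := sInf {k : ℕ | ∃ p, S p ∧ p.totalDegree = d ∧ tc p = k} with ht
  have htmin : ∀ p, S p → p.totalDegree = d → t ≤ tc p := fun p hp hpd =>
    Nat.sInf_le ⟨p, hp, hpd, rfl⟩
  -- normalize the top coefficient
  obtain ⟨m0, hm0s, hm0d⟩ := S6.top_monomial hPS.1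
  rw [hPd] at hm0d
  have hc0 : coeff m0 P ≠ 0 := MvPolynomial.mem_support_iff.mp hm0s
  set c : E := coeff m0 P with hcc
  set P' : MvPolynomial (Fin n) E := C c⁻¹ * P with hP'
  have hsupp : P'.support = P.support := S6.support_C_mul (inv_ne_zero hc0) P
  have hP'0 : P' ≠ 0 := by
    intro hc
    have h2 := hsupp
    rw [hc, MvPolynomial.support_zero] at h2
    exact hPS.1 (MvPolynomial.support_eq_empty.mp h2.symm)
  have hP'd : P'.totalDegree = d := by
    rw [totalDegree, hsupp, ← totalDegree, hPd]
  have hP'F : ∀ m, coeff m P' ∈ F := fun m => by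
    rw [hP', coeff_C_mul]
    exact F.mul_mem (F.inv_mem (hPS.2.1 m0)) (hPS.2.1 m)
  have hP'e : eval ζ P' = 0 := by
    rw [hP', map_mul, eval_C, hPS.2.2, mul_zero]
  have hP'S : S P' := ⟨hP'0, hP'F, hP'e⟩
  have hP't : tc P' = t := by
    show (P'.support.filter fun m => S6.mdeg m = d).card = t
    rw [hsupp]
    exact hPt
  have hm0c : coeff m0 P' = 1 := by
    rw [hP', coeff_C_mul, ← hcc, inv_mul_cancel₀ hc0]
  -- the key step : Qp P' = 0
  have hQ0 : S6.Qp ζ hD P' = 0 := by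
    by_contra hQne
    have hQF : ∀ m, coeff m (S6.Qp ζ hD P') ∈ F := S6.coeff_Qp_mem ζ hD hF hζ hP'F
    have hQe : eval ζ (S6.Qp ζ hD P') = 0 := by
      rw [S6.eval_Qp, hP'e, S6.D0 hD]
    have hQS : S (S6.Qp ζ hD P') := ⟨hQne, hQF, hQe⟩
    have hQd : (S6.Qp ζ hD P').totalDegree = d := by
      have h1 := S6.totalDegree_Qp_le ζ hD P'
      have h2 := hdmin _ hQS
      omega
    have hsub : ((S6.Qp ζ hD P').support.filter fun m => S6.mdeg m = d) ⊆
        (P'.support.filter fun m => S6.mdeg m = d).erase m0 := by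
      intro m hm
      rw [Finset.mem_filter, MvPolynomial.mem_support_iff] at hm
      obtain ⟨hmne, hmd⟩ := hm
      have hpdz : ∀ j, coeff m (pderiv j P') = 0 := fun j =>
        S6.coeff_pderiv_eq_zero _ _ _ (by omega)
      rw [S6.coeff_Qp] at hmne
      rw [Finset.sum_eq_zero (fun j _ => by rw [hpdz j, mul_zero]), add_zero] at hmne
      have hcm : coeff m P' ≠ 0 := fun hz => hmne (by rw [hz, S6.D0 hD])
      have hmm0 : m ≠ m0 := by
        intro hc
        rw [hc, hm0c] at hmne
        exact hmne (S6.D1 hD)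
      exact Finset.mem_erase.mpr ⟨hmm0,
        Finset.mem_filter.mpr ⟨MvPolynomial.mem_support_iff.mpr hcm, hmd⟩⟩
    have hm0f : m0 ∈ P'.support.filter fun m => S6.mdeg m = d :=
      Finset.mem_filter.mpr ⟨by rw [hsupp]; exact hm0s, hm0d⟩
    have hlt : tc (S6.Qp ζ hD P') < tc P' := by
      calc tc (S6.Qp ζ hD P') ≤ ((P'.support.filter fun m => S6.mdeg m = d).erase m0).card :=
            Finset.card_le_card hsub
        _ < (P'.support.filter fun m => S6.mdeg m = d).card :=
            Finset.card_erase_lt_of_mem hm0f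
        _ = tc P' := rfl
    have := htmin _ hQS hQd
    omega
  -- d ≥ 1
  have hd1 : 1 ≤ d := by
    by_contra hd0
    push_neg at hd0
    have hdz : d = 0 := by omega
    have hle1 : P'.totalDegree ≤ 1 := by omega
    have hsing : ∀ i : Fin n, coeff (Finsupp.single i 1) P' = 0 := fun i => by
      apply coeff_eq_zero_of_totalDegree_lt
      rw [S6.sum_support_eq_mdeg, S6.mdeg_single]
      omega
    have := S6.eval_of_totalDegree_le_one ζ hle1
    rw [hP'e] at this
    rw [Finset.sum_eq_zero (fun i _ => by rw [hsing i, zero_mul]), add_zero] at this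
    -- P' = 0 : contradiction
    apply hP'0
    apply MvPolynomial.ext
    intro m
    rcases eq_or_ne m 0 with rfl | hm
    · rw [← this, coeff_zero]
    · rw [coeff_zero]
      apply coeff_eq_zero_of_totalDegree_lt
      rw [S6.sum_support_eq_mdeg]
      have : S6.mdeg m ≠ 0 := fun hz => hm (S6.mdeg_eq_zero hz)
      omega
  exact S6.main_ind ζ hD hF hNNC hζ d P' hP'd hP'0 hP'F hQ0 hd1
end

section
/- Let F be a differential field of characteristic zero with field of constants C, and let E = F(ζ₁,…,ζ_t) be an antiderivative extension of F with ζ₁,…,ζ_t algebraically independent over F. An element ζ ∈ E is an antiderivative of F if and only if there exist constants α₁,…,α_t ∈ C and an element a ∈ F such that ζ = Σᵢ₌₁ᵗ αᵢζᵢ + a. -/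
section S7aux
open Polynomial
namespace S7
variable {E : Type*} [Field E] {D : E → E}

theorem D_zero (hD : IsDeriv D) : D 0 = 0 := by
  have h := hD.1 0 0; simp only [add_zero] at h; exact (left_eq_add.mp h)

theorem D_one (hD : IsDeriv D) : D 1 = 0 := by
  have h := hD.2 1 1; simp only [mul_one, one_mul] at h; exact (left_eq_add.mp h)

theorem D_neg (hD : IsDeriv D) (x : E) : D (-x) = -D x := by
  have h := hD.1 x (-x)
  rw [add_neg_cancel, D_zero hD] at h
  linear_combination -h

theorem D_sub (hD : IsDeriv D) (x y : E) : D (x - y) = D x - D y := by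
  rw [sub_eq_add_neg, hD.1, D_neg hD, sub_eq_add_neg]

theorem D_inv (hD : IsDeriv D) (x : E) (hx : x ≠ 0) : D x⁻¹ = -(D x / x ^ 2) := by
  have h := hD.2 x x⁻¹
  rw [mul_inv_cancel₀ hx, D_one hD] at h
  have h2 : x⁻¹ * (D x * x⁻¹ + x * D x⁻¹) = 0 := by rw [← h, mul_zero]
  rw [mul_add, ← mul_assoc x⁻¹ x, inv_mul_cancel₀ hx, one_mul] at h2
  rw [div_eq_mul_inv, pow_two, mul_inv]
  linear_combination h2

theorem D_div (hD : IsDeriv D) (x y : E) (hy : y ≠ 0) :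
    D (x / y) = (D x * y - x * D y) / y ^ 2 := by
  rw [div_eq_mul_inv, hD.2, D_inv hD y hy]
  field_simp
  ring

theorem D_pow (hD : IsDeriv D) (x : E) (n : ℕ) : D (x ^ n) = n * x ^ (n - 1) * D x := by
  induction n with
  | zero => simp [D_one hD]
  | succ m ih =>
    rw [pow_succ, hD.2, ih]
    cases m with
    | zero => simp
    | succ k =>
      push_cast
      ring

theorem D_natCast (hD : IsDeriv D) (n : ℕ) : D (n : E) = 0 := by
  induction n with
  | zero => simpa using D_zero hD
  | succ m ih => push_cast; rw [hD.1, ih, D_one hD, add_zero]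

theorem D_sum (hD : IsDeriv D) {ι : Type*} (s : Finset ι) (f : ι → E) :
    D (∑ i ∈ s, f i) = ∑ i ∈ s, D (f i) := by
  classical
  induction s using Finset.induction_on with
  | empty => simpa using D_zero hD
  | insert _ _ h ih => rw [Finset.sum_insert h, hD.1, ih, Finset.sum_insert h]

section Adjoin
variable {E : Type*} [Field E]

theorem le_adjoinSF (F : Subfield E) (S : Set E) : F ≤ adjoinSF F S :=
  fun _ ha => Subfield.subset_closure (Or.inl ha)

theorem subset_adjoinSF (F : Subfield E) (S : Set E) : S ⊆ ↑(adjoinSF F S) :=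
  fun _ ha => Subfield.subset_closure (Or.inr ha)

theorem adjoinSF_le {F M : Subfield E} {S : Set E} (h1 : F ≤ M) (h2 : S ⊆ ↑M) :
    adjoinSF F S ≤ M :=
  (Subfield.closure_le).2 (Set.union_subset h1 h2)

theorem adjoinSF_empty (F : Subfield E) : adjoinSF F (∅ : Set E) = F := by
  rw [adjoinSF, Set.union_empty, Subfield.closure_eq]

theorem adjoinSF_adjoinSF (F : Subfield E) (A B : Set E) :
    adjoinSF (adjoinSF F A) B = adjoinSF F (A ∪ B) := by
  apply le_antisymm
  · exact adjoinSF_le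
      (adjoinSF_le (le_adjoinSF F _) (le_trans Set.subset_union_left (subset_adjoinSF F _)))
      (le_trans Set.subset_union_right (subset_adjoinSF F _))
  · exact adjoinSF_le (le_trans (le_adjoinSF F A) (le_adjoinSF _ B))
      (Set.union_subset (le_trans (subset_adjoinSF F A)
        (SetLike.coe_subset_coe.2 (le_adjoinSF _ B))) (subset_adjoinSF _ B))

/-- Every element of `F(S)` is a ratio of two elements of the ring `F[S]`. -/
theorem adjoinSF_ratio {F : Subfield E} {S : Set E} {y : E} (hy : y ∈ adjoinSF F S) :
    ∃ a b : E, a ∈ Algebra.adjoin (↥F) S ∧ b ∈ Algebra.adjoin (↥F) S ∧ b ≠ 0 ∧ y = a / b := by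
  have hrange : Set.range (algebraMap (↥F) E) = (F : Set E) := Subtype.range_coe
  have hclos : Subring.closure ((F : Set E) ∪ S) = (Algebra.adjoin (↥F) S).toSubring := by
    rw [Algebra.adjoin_eq_ring_closure, hrange]
  rw [adjoinSF, Subfield.mem_closure_iff] at hy
  obtain ⟨a, ha, b, hb, hab⟩ := hy
  rw [hclos, Subalgebra.mem_toSubring] at ha hb
  by_cases hb0 : b = 0
  · refine ⟨0, 1, Subalgebra.zero_mem _, Subalgebra.one_mem _, one_ne_zero, ?_⟩
    rw [← hab, hb0, div_zero, zero_div]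
  · exact ⟨a, b, ha, hb, hb0, hab.symm⟩

/-- Every element of `K(x)` is a ratio of polynomials in `x` over `K`. -/
theorem adjoinSF_simple_ratio {K : Subfield E} {x y : E} (hy : y ∈ adjoinSF K {x}) :
    ∃ p q : Polynomial (↥K), y = Polynomial.aeval x p / Polynomial.aeval x q := by
  obtain ⟨a, b, ha, hb, _, hab⟩ := adjoinSF_ratio hy
  rw [Algebra.adjoin_singleton_eq_range_aeval] at ha hb
  obtain ⟨p, hp⟩ := ha
  obtain ⟨q, hq⟩ := hb
  exact ⟨p, q, by rw [hab, ← hp, ← hq]; rfl⟩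

/-- helper: coefficient of `∑ j ∈ range n, C (f j) * X ^ j`. -/
theorem coeff_sum_C_mul_X_pow {R : Type*} [CommRing R] (n : ℕ) (f : ℕ → R) (k : ℕ) :
    (∑ j ∈ Finset.range n, C (f j) * X ^ j).coeff k = if k ∈ Finset.range n then f k else 0 := by
  rw [finset_sum_coeff]
  rw [Finset.sum_congr rfl (fun j _ => by rw [coeff_C_mul, coeff_X_pow, mul_ite, mul_one, mul_zero])]
  simp [Finset.sum_ite_eq' (Finset.range n) k f]

theorem transcendental_adjoinSF {F : Subfield E} {S : Set E} {x : E}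
    (h : Transcendental (↥(Algebra.adjoin (↥F) S)) x) :
    Transcendental (↥(adjoinSF F S)) x := by
  rw [transcendental_iff] at h ⊢
  intro p hp
  choose a b ha hb hb0 hab using fun j : ℕ => adjoinSF_ratio (SetLike.coe_mem (p.coeff j))
  set A := Algebra.adjoin (↥F) S with hA
  set n := p.natDegree with hn
  set Bf : E := ∏ k ∈ Finset.range (n+1), b k with hBf
  have hB0 : Bf ≠ 0 := Finset.prod_ne_zero_iff.2 fun k _ => hb0 k
  set c : ℕ → ↥A := fun j =>
    (⟨a j, ha j⟩ : ↥A) * ∏ k ∈ (Finset.range (n+1)).erase j, (⟨b k, hb k⟩ : ↥A) with hc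
  have key : ∀ j ∈ Finset.range (n+1), ((c j : E)) = Bf * ((p.coeff j : E)) := by
    intro j hj
    have h1 : ((c j : E)) = a j * ∏ k ∈ (Finset.range (n+1)).erase j, b k := by
      rw [hc]
      push_cast
      rfl
    have h2 : Bf = b j * ∏ k ∈ (Finset.range (n+1)).erase j, b k :=
      (Finset.mul_prod_erase _ _ hj).symm
    rw [h1, h2, hab j, div_eq_mul_inv]
    have hbb : b j * (b j)⁻¹ = 1 := mul_inv_cancel₀ (hb0 j)
    linear_combination (-(a j * ∏ k ∈ (Finset.range (n+1)).erase j, b k)) * hbb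
  set q : Polynomial (↥A) := ∑ j ∈ Finset.range (n+1), C (c j) * X ^ j with hq
  have hqeval : Polynomial.aeval x q = 0 := by
    have e1 : Polynomial.aeval x q = ∑ j ∈ Finset.range (n+1), ((c j : E)) * x ^ j := by
      rw [hq, map_sum]
      refine Finset.sum_congr rfl fun j _ => ?_
      rw [map_mul, map_pow, aeval_C, aeval_X]
      rfl
    have e2 : Polynomial.aeval x p = ∑ j ∈ Finset.range (n+1), ((p.coeff j : E)) * x ^ j := by
      rw [Polynomial.aeval_eq_sum_range]
      exact Finset.sum_congr rfl fun j _ => by rw [Algebra.smul_def]; rfl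
    rw [e1, Finset.sum_congr rfl (fun j hj => by rw [key j hj, mul_assoc] :
      ∀ j ∈ Finset.range (n+1), ((c j : E)) * x ^ j = Bf * (((p.coeff j : E)) * x ^ j)),
      ← Finset.mul_sum, ← e2, hp, mul_zero]
  have hq0 : q = 0 := h q hqeval
  have hcoeff : ∀ j ∈ Finset.range (n+1), p.coeff j = 0 := by
    intro j hj
    have : q.coeff j = 0 := by rw [hq0]; simp
    rw [hq, coeff_sum_C_mul_X_pow, if_pos hj] at this
    have : ((c j : E)) = 0 := by rw [this]; rfl
    rw [key j hj] at this
    have : ((p.coeff j : E)) = 0 := by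
      rcases mul_eq_zero.mp this with h' | h'
      · exact absurd h' hB0
      · exact h'
    exact Subtype.ext this
  ext j
  rcases le_or_gt j n with hj | hj
  · simpa using hcoeff j (Finset.mem_range.mpr (Nat.lt_succ_of_le hj))
  · simp [coeff_eq_zero_of_natDegree_lt hj]

theorem transcendental_last {t : ℕ} {F : Subfield E} {ζ : Fin (t+1) → E}
    (hind : AlgebraicIndependent (↥F) ζ) :
    Transcendental (↥(adjoinSF F (Set.range (ζ ∘ Fin.castSucc)))) (ζ (Fin.last t)) := by
  apply transcendental_adjoinSF
  have h1 : AlgebraicIndependent (↥F) (ζ ∘ Fin.castSucc) :=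
    hind.comp _ (Fin.castSucc_injective t)
  have h2 : AlgebraicIndependent (↥F)
      (fun o : Option (Fin t) => o.elim (ζ (Fin.last t)) (ζ ∘ Fin.castSucc)) := by
    have h3 := hind.comp (finSuccEquivLast.symm) finSuccEquivLast.symm.injective
    have h4 : ζ ∘ finSuccEquivLast.symm =
        fun o : Option (Fin t) => o.elim (ζ (Fin.last t)) (ζ ∘ Fin.castSucc) := by
      funext o
      cases o <;> simp
    rwa [h4] at h3
  exact (h1.option_iff_transcendental _).1 h2

theorem isDiffSubfield_adjoinSF {D : E → E} (hD : IsDeriv D) {F : Subfield E} {S : Set E}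
    (hF : IsDiffSubfield D F) (hS : ∀ s ∈ S, D s ∈ adjoinSF F S) :
    IsDiffSubfield D (adjoinSF F S) := by
  have main : ∀ z, z ∈ Subfield.closure ((F : Set E) ∪ S) → D z ∈ adjoinSF F S := by
    intro y hy
    induction hy using Subfield.closure_induction with
    | mem z hz =>
      rcases hz with hz | hz
      · exact le_adjoinSF F S (hF z hz)
      · exact hS z hz
    | one => rw [D_one hD]; exact zero_mem _
    | add z w hz hw ihz ihw => rw [hD.1]; exact add_mem ihz ihw
    | neg z hz ihz => rw [D_neg hD]; exact neg_mem ihz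
    | inv z hz ihz =>
      by_cases h0 : z = 0
      · subst h0; rw [inv_zero, D_zero hD]; exact zero_mem _
      · rw [D_inv hD z h0]
        exact neg_mem (div_mem ihz (pow_mem hz 2))
    | mul z w hz hw ihz ihw =>
      rw [hD.2]
      exact add_mem (mul_mem ihz (hw : w ∈ adjoinSF F S))
        (mul_mem (hz : z ∈ adjoinSF F S) ihw)
  exact fun y hy => main y hy

end Adjoin

section OneVar
variable {E : Type*} [Field E] {D : E → E} {K : Subfield E}

/-- The derivation restricted to the subfield `K`. -/
noncomputable def dK (hK : IsDiffSubfield D K) : ↥K → ↥K := fun a => ⟨D ↑a, hK _ a.2⟩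

/-- Coefficientwise application of `D` to a polynomial over `K`. -/
noncomputable def Dc (hK : IsDiffSubfield D K) (p : Polynomial (↥K)) : Polynomial (↥K) :=
  ∑ j ∈ Finset.range (p.natDegree + 1), Polynomial.C (dK hK (p.coeff j)) * Polynomial.X ^ j

theorem dK_zero (hD : IsDeriv D) (hK : IsDiffSubfield D K) : dK hK 0 = 0 := by
  apply Subtype.ext
  show D (((0 : ↥K) : E)) = (((0 : ↥K) : E))
  rw [ZeroMemClass.coe_zero, D_zero hD]

theorem dK_coe (hK : IsDiffSubfield D K) (a : ↥K) : ((dK hK a : E)) = D ↑a := rfl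

theorem dK_one (hD : IsDeriv D) (hK : IsDiffSubfield D K) : dK hK 1 = 0 := by
  apply Subtype.ext
  show D (((1 : ↥K) : E)) = (((0 : ↥K) : E))
  rw [OneMemClass.coe_one, D_one hD, ZeroMemClass.coe_zero]

theorem coeff_Dc (hD : IsDeriv D) (hK : IsDiffSubfield D K) (p : Polynomial (↥K)) (k : ℕ) :
    (Dc hK p).coeff k = dK hK (p.coeff k) := by
  rw [Dc, coeff_sum_C_mul_X_pow]
  by_cases hk : k ∈ Finset.range (p.natDegree + 1)
  · rw [if_pos hk]
  · rw [if_neg hk]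
    have : p.coeff k = 0 := coeff_eq_zero_of_natDegree_lt
      (by simpa using Nat.lt_of_succ_le (not_lt.1 (fun h => hk (Finset.mem_range.2 h))))
    rw [this, dK_zero hD hK]

theorem Dc_add (hD : IsDeriv D) (hK : IsDiffSubfield D K) (p q : Polynomial (↥K)) :
    Dc hK (p + q) = Dc hK p + Dc hK q := by
  refine Polynomial.ext fun k => ?_
  rw [coeff_add, coeff_Dc hD hK, coeff_Dc hD hK, coeff_Dc hD hK, coeff_add]
  apply Subtype.ext
  push_cast [dK_coe]
  exact hD.1 _ _

theorem Dc_monomial (hD : IsDeriv D) (hK : IsDiffSubfield D K) (n : ℕ) (a : ↥K) :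
    Dc hK (monomial n a) = monomial n (dK hK a) := by
  refine Polynomial.ext fun k => ?_
  rw [coeff_Dc hD hK, coeff_monomial, coeff_monomial]
  split_ifs with h
  · rfl
  · exact dK_zero hD hK

theorem aeval_Dc (hD : IsDeriv D) (hK : IsDiffSubfield D K) (x : E) (p : Polynomial (↥K)) :
    D (Polynomial.aeval x p) =
      Polynomial.aeval x (Dc hK p) + D x * Polynomial.aeval x (derivative p) := by
  induction p using Polynomial.induction_on' with
  | add p q hp hq =>
    rw [map_add, hD.1, hp, hq, Dc_add hD hK, derivative_add, map_add, map_add]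
    ring
  | monomial n a =>
    rw [aeval_monomial, Dc_monomial hD hK, derivative_monomial, aeval_monomial, aeval_monomial]
    have hc1 : (algebraMap (↥K) E) a = (a : E) := rfl
    have hc2 : (algebraMap (↥K) E) (dK hK a) = D (a : E) := rfl
    have hc3 : (algebraMap (↥K) E) (a * (n : ↥K)) = (a : E) * (n : E) := by push_cast; rfl
    rw [hc1, hc2, hc3, hD.2, D_pow hD]
    ring

theorem poly_case [CharZero E] (hD : IsDeriv D) (hK : IsDiffSubfield D K)
    (hC : ∀ y : E, D y = 0 → y ∈ K) (x : E)
    (hxt : ∀ p : Polynomial (↥K), Polynomial.aeval x p = 0 → p = 0) (hxd : D x ∈ K)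
    (p : Polynomial (↥K)) (hud : D (Polynomial.aeval x p) ∈ K) :
    ∃ c v : E, D c = 0 ∧ v ∈ K ∧ Polynomial.aeval x p = c * x + v := by
  set fx : ↥K := ⟨D x, hxd⟩ with hfx
  set w : ↥K := ⟨D (Polynomial.aeval x p), hud⟩ with hw
  have hiden : Dc hK p + C fx * derivative p = C w := by
    rw [← sub_eq_zero]
    apply hxt
    rw [map_sub, map_add, map_mul, aeval_C, aeval_C]
    have h1 : (algebraMap (↥K) E) fx = D x := rfl
    have h2 : (algebraMap (↥K) E) w = D (Polynomial.aeval x p) := rfl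
    rw [h1, h2, aeval_Dc hD hK]
    ring
  have coeff_iden : ∀ k : ℕ, dK hK (p.coeff k) + fx * (p.coeff (k+1) * ((k : ↥K) + 1)) =
      (C w).coeff k := by
    intro k
    have h := Polynomial.ext_iff.1 hiden k
    rw [coeff_add, coeff_C_mul, coeff_Dc hD hK, coeff_derivative] at h
    exact h
  rcases le_or_gt p.natDegree 1 with hn | hn
  · refine ⟨((p.coeff 1 : E)), ((p.coeff 0 : E)), ?_, (p.coeff 0).2, ?_⟩
    · have h1 := coeff_iden 1
      have h2 : p.coeff 2 = 0 := coeff_eq_zero_of_natDegree_lt (lt_of_le_of_lt hn one_lt_two)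
      rw [h2, zero_mul, mul_zero, add_zero, coeff_C, if_neg one_ne_zero] at h1
      exact congrArg Subtype.val h1
    · conv_lhs => rw [eq_X_add_C_of_natDegree_le_one hn]
      rw [map_add, map_mul, aeval_C, aeval_X, aeval_C]
      rfl
  · exfalso
    have hp0 : p ≠ 0 := fun h => by rw [h, Polynomial.natDegree_zero] at hn; omega
    set n := p.natDegree with hnn
    have hAne : p.coeff n ≠ 0 := by
      rw [hnn, coeff_natDegree]
      exact leadingCoeff_ne_zero.2 hp0
    -- coefficient n : D (coeff n) = 0
    have e1 := coeff_iden n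
    have e1' : p.coeff (n + 1) = 0 := coeff_eq_zero_of_natDegree_lt (Nat.lt_succ_self n)
    rw [e1', zero_mul, mul_zero, add_zero, coeff_C, if_neg (by omega)] at e1
    have hDA : D ((p.coeff n : E)) = 0 := congrArg Subtype.val e1
    -- coefficient n-1
    have e2 := coeff_iden (n - 1)
    rw [coeff_C, if_neg (by omega), show n - 1 + 1 = n by omega] at e2
    have hDB : D ((p.coeff (n-1) : E)) + D x * ((p.coeff n : E) * ((n : E))) = 0 := by
      have := congrArg Subtype.val e2
      push_cast at this ⊢
      convert this using 3
      · rfl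
      · rw [show ((n:E)) = ((n-1 : ℕ) : E) + 1 by push_cast [Nat.cast_sub (by omega : 1 ≤ n)]; ring]
    set A : E := ((p.coeff n : E)) with hA
    set B : E := ((p.coeff (n-1) : E)) with hB
    have hAne' : A ≠ 0 := fun h => hAne (Subtype.ext h)
    have hnA : ((n : E)) * A ≠ 0 :=
      mul_ne_zero (Nat.cast_ne_zero.2 (by omega)) hAne'
    have hDnA : D (((n : E)) * A) = 0 := by
      rw [hD.2, D_natCast hD, zero_mul, hDA, mul_zero, add_zero]
    have hDy : D (x + B / (((n : E)) * A)) = 0 := by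
      rw [hD.1, D_div hD _ _ hnA, hDnA, mul_zero, sub_zero]
      have hDBe : D B = -(D x * (A * ((n:E)))) := by linear_combination hDB
      rw [hDBe]
      have hn0 : (n : E) ≠ 0 := Nat.cast_ne_zero.2 (by omega)
      field_simp
      ring
    have hyK := hC _ hDy
    have hxK : x ∈ K := by
      have hx : x = (x + B / (((n : E)) * A)) - B / (((n : E)) * A) := by ring
      rw [hx]
      exact sub_mem hyK (div_mem (p.coeff (n-1)).2
        (mul_mem (by exact_mod_cast natCast_mem K n) (p.coeff n).2))
    exact X_sub_C_ne_zero (⟨x, hxK⟩ : ↥K)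
      (hxt _ (by rw [map_sub, aeval_X, aeval_C]; exact sub_eq_zero.2 rfl))

theorem onevar [CharZero E] (hD : IsDeriv D) (hK : IsDiffSubfield D K)
    (hC : ∀ y : E, D y = 0 → y ∈ K) (x : E) (hxtr : Transcendental (↥K) x) (hxd : D x ∈ K)
    (u : E) (hu : u ∈ adjoinSF K {x}) (hud : D u ∈ K) :
    ∃ c v : E, D c = 0 ∧ v ∈ K ∧ u = c * x + v := by
  classical
  have hxt : ∀ p : Polynomial (↥K), Polynomial.aeval x p = 0 → p = 0 := fun p hp =>
    transcendental_iff.1 hxtr p hp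
  obtain ⟨p0, q0, hpq⟩ := adjoinSF_simple_ratio hu
  by_cases hq0 : Polynomial.aeval x q0 = 0
  · exact ⟨0, 0, D_zero hD, zero_mem K, by rw [hpq, hq0, div_zero, zero_mul, zero_add]⟩
  have hq0' : q0 ≠ 0 := fun h => hq0 (by rw [h, map_zero])
  set g := gcd p0 q0 with hg
  have hg0 : g ≠ 0 := gcd_ne_zero_of_right hq0'
  set p1 := p0 / g with hp1
  set q1 := q0 / g with hq1
  have hp0e : g * p1 = p0 := EuclideanDomain.mul_div_cancel' hg0 (gcd_dvd_left p0 q0)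
  have hq0e : g * q1 = q0 := EuclideanDomain.mul_div_cancel' hg0 (gcd_dvd_right p0 q0)
  have hq1ne : q1 ≠ 0 := right_div_gcd_ne_zero hq0'
  have hcop : IsCoprime p1 q1 := isCoprime_div_gcd_div_gcd hq0'
  set lc := q1.leadingCoeff with hlc
  have hlcne : lc ≠ 0 := leadingCoeff_ne_zero.2 hq1ne
  set p2 := p1 * C lc⁻¹ with hp2
  set q2 := q1 * C lc⁻¹ with hq2
  have hq2monic : q2.Monic := monic_mul_leadingCoeff_inv hq1ne
  have hq2ne : q2 ≠ 0 := hq2monic.ne_zero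
  have hcop2 : IsCoprime p2 q2 :=
    (isCoprime_mul_unit_right
      (isUnit_C.2 (IsUnit.mk0 _ (inv_ne_zero hlcne))) p1 q1).2 hcop
  have hgx : Polynomial.aeval x g ≠ 0 := fun h => hg0 (hxt _ h)
  have hlcx : Polynomial.aeval x (C lc⁻¹) ≠ 0 := by
    rw [aeval_C]
    intro h
    have h' : ((lc⁻¹ : ↥K) : E) = ((0 : ↥K) : E) := by rw [ZeroMemClass.coe_zero]; exact h
    exact inv_ne_zero hlcne (Subtype.ext_iff.2 h')
  have hupq : u = Polynomial.aeval x p2 / Polynomial.aeval x q2 := by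
    rw [hpq, ← hp0e, ← hq0e, hp2, hq2, map_mul, map_mul, map_mul, map_mul]
    rw [mul_div_mul_left _ _ hgx, mul_div_mul_right _ _ hlcx]
  set Px := Polynomial.aeval x p2 with hPx
  set Qx := Polynomial.aeval x q2 with hQx
  have hQne : Qx ≠ 0 := fun h => hq2ne (hxt _ h)
  have huQ : u * Qx = Px := by rw [hupq]; field_simp
  set fx : ↥K := ⟨D x, hxd⟩ with hfx
  set w : ↥K := ⟨D u, hud⟩ with hw
  have hDQ : D Qx = Polynomial.aeval x (Dc hK q2 + C fx * derivative q2) := by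
    rw [map_add, map_mul, aeval_C, aeval_Dc hD hK]
    rfl
  have hDP : D Px = Polynomial.aeval x (Dc hK p2 + C fx * derivative p2) := by
    rw [map_add, map_mul, aeval_C, aeval_Dc hD hK]
    rfl
  have hEe : D u * Qx + u * D Qx = D Px := by rw [← hD.2, huQ]
  have hpoly : C w * q2 * q2 + p2 * (Dc hK q2 + C fx * derivative q2) =
      (Dc hK p2 + C fx * derivative p2) * q2 := by
    rw [← sub_eq_zero]
    apply hxt
    have h1 : (algebraMap (↥K) E) w = D u := rfl
    simp only [map_sub, map_add, map_mul, aeval_C] at hDQ hDP ⊢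
    rw [h1]
    rw [← hPx, ← hQx]
    linear_combination Qx * hEe - (D Qx) * huQ - Px * hDQ + Qx * hDP
  have hdvd : q2 ∣ p2 * (Dc hK q2 + C fx * derivative q2) :=
    ⟨Dc hK p2 + C fx * derivative p2 - C w * q2, by linear_combination hpoly⟩
  have hdvd2 : q2 ∣ Dc hK q2 + C fx * derivative q2 :=
    (hcop2.symm).dvd_of_dvd_mul_left hdvd
  by_cases hdeg : q2.natDegree = 0
  · have hq21 : q2 = 1 := hq2monic.natDegree_eq_zero.1 hdeg
    have hQx1 : Qx = 1 := by rw [hQx, hq21, map_one]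
    have huP : u = Px := by rw [hupq, hQx1, div_one]
    obtain ⟨c, v, h1, h2, h3⟩ := poly_case hD hK hC x hxt hxd p2 (by rw [← hPx, ← huP]; exact hud)
    exact ⟨c, v, h1, h2, by rw [huP, hPx]; exact h3⟩
  · exfalso
    have hdegc : (Dc hK q2 + C fx * derivative q2).degree < q2.degree := by
      have hdc : (Dc hK q2).degree < q2.degree := by
        rw [degree_eq_natDegree hq2ne, degree_lt_iff_coeff_zero]
        intro m hm
        rw [coeff_Dc hD hK]
        rcases eq_or_lt_of_le hm with he | hl
        · rw [← he, Monic.coeff_natDegree hq2monic, dK_one hD hK]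
        · rw [coeff_eq_zero_of_natDegree_lt hl, dK_zero hD hK]
      have hd2 : (C fx * derivative q2).degree < q2.degree := by
        calc (C fx * derivative q2).degree ≤ 0 + (derivative q2).degree :=
              le_trans (degree_mul_le _ _) (add_le_add_left degree_C_le _)
          _ = (derivative q2).degree := zero_add _
          _ < q2.degree := degree_derivative_lt hq2ne
      exact lt_of_le_of_lt (degree_add_le _ _) (max_lt hdc hd2)
    have hzero : Dc hK q2 + C fx * derivative q2 = 0 :=
      eq_zero_of_dvd_of_degree_lt hdvd2 hdegc
    have hDQ0 : D Qx = 0 := by rw [hDQ, hzero, map_zero]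
    have hQK : Qx ∈ K := hC _ hDQ0
    have h5 := hxt (q2 - C ⟨Qx, hQK⟩) (by rw [map_sub, aeval_C]; exact sub_eq_zero.2 rfl)
    have h6 : q2 = C ⟨Qx, hQK⟩ := sub_eq_zero.1 h5
    exact hdeg (by rw [h6, natDegree_C])

end OneVar

section Main
variable {E : Type*} [Field E] [CharZero E] {D : E → E}

theorem main (hD : IsDeriv D) (F : Subfield E) (hF : IsDiffSubfield D F)
    (hNNC : ∀ x : E, D x = 0 → x ∈ F) :
    ∀ (t : ℕ) (ζ : Fin t → E), (∀ i, D (ζ i) ∈ F) → AlgebraicIndependent (↥F) ζ →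
    ∀ u : E, u ∈ adjoinSF F (Set.range ζ) → D u ∈ F →
    ∃ α : Fin t → E, (∀ i, α i ∈ F ∧ D (α i) = 0) ∧
      ∃ a ∈ F, u = (∑ i, α i * ζ i) + a := by
  intro t
  induction t with
  | zero =>
    intro ζ hζ hind u hu hud
    rw [Set.range_eq_empty, adjoinSF_empty] at hu
    exact ⟨fun i => i.elim0, fun i => i.elim0, u, hu,
      by rw [Finset.univ_eq_empty, Finset.sum_empty, zero_add]⟩
  | succ t ih =>
    intro ζ hζ hind u hu hud
    set ζ' := ζ ∘ Fin.castSucc with hζ'def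
    set x := ζ (Fin.last t) with hxdef
    set K := adjoinSF F (Set.range ζ') with hKdef
    have hFK : F ≤ K := le_adjoinSF _ _
    have hK : IsDiffSubfield D K := by
      apply isDiffSubfield_adjoinSF hD hF
      rintro s ⟨i, rfl⟩
      exact hFK (hζ (Fin.castSucc i))
    have hC : ∀ y : E, D y = 0 → y ∈ K := fun y hy => hFK (hNNC y hy)
    have hxtr : Transcendental (↥K) x := transcendental_last hind
    have hxd : D x ∈ K := hFK (hζ _)
    have hsplit : Set.range ζ = Set.range ζ' ∪ {x} := by
      ext y
      constructor
      · rintro ⟨i, rfl⟩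
        rcases Fin.eq_castSucc_or_eq_last i with ⟨j, rfl⟩ | rfl
        · exact Or.inl ⟨j, rfl⟩
        · exact Or.inr rfl
      · rintro (⟨i, rfl⟩ | rfl)
        · exact ⟨Fin.castSucc i, rfl⟩
        · exact ⟨Fin.last t, rfl⟩
    have hu' : u ∈ adjoinSF K {x} := by
      rw [hKdef, adjoinSF_adjoinSF, ← hsplit]
      exact hu
    obtain ⟨c, v, hc0, hvK, hucv⟩ := onevar hD hK hC x hxtr hxd u hu' (hFK hud)
    have hcF : c ∈ F := hNNC c hc0
    have hvd : D v ∈ F := by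
      have hveq : v = u - c * x := by rw [hucv]; ring
      rw [hveq, D_sub hD, hD.2, hc0, zero_mul, zero_add]
      exact sub_mem hud (mul_mem hcF (hζ _))
    have hind' : AlgebraicIndependent (↥F) ζ' := hind.comp _ (Fin.castSucc_injective t)
    obtain ⟨α', hα', a, haF, hva⟩ := ih ζ' (fun i => hζ _) hind' v hvK hvd
    refine ⟨Fin.snoc α' c, ?_, a, haF, ?_⟩
    · intro i
      refine Fin.lastCases ?_ ?_ i
      · rw [Fin.snoc_last]; exact ⟨hcF, hc0⟩
      · intro j; rw [Fin.snoc_castSucc]; exact hα' j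
    · rw [Fin.sum_univ_castSucc]
      simp only [Fin.snoc_castSucc, Fin.snoc_last]
      rw [hucv, hva]
      simp only [hζ'def, Function.comp_apply]
      ring

end Main
end S7
end S7aux

/-- `E = F(ζ₁,…,ζ_t)` (the ambient field, `⊤`) is an antiderivative
extension of `F` with `ζ₁,…,ζ_t` algebraically independent over `F`. An element
`u ∈ E` is an antiderivative of `F` iff `u = Σ αᵢζᵢ + a` with the `αᵢ` constants
and `a ∈ F`. -/
theorem statement7 {E : Type*} [Field E] [CharZero E] (D : E → E) (hD : IsDeriv D)
    (F : Subfield E) (hF : IsDiffSubfield D F)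
    (hNNC : ∀ x : E, D x = 0 → x ∈ F)  -- E is a no new constants extension of F
    (t : ℕ) (ζ : Fin t → E) (hζ : ∀ i, D (ζ i) ∈ F)
    (hind : AlgebraicIndependent F ζ)
    (htop : adjoinSF F (Set.range ζ) = ⊤)
    (u : E) :
    D u ∈ F ↔
      ∃ α : Fin t → E, (∀ i, α i ∈ F ∧ D (α i) = 0) ∧
        ∃ a ∈ F, u = (∑ i, α i * ζ i) + a := by
  constructor
  · intro hud
    exact S7.main hD F hF hNNC t ζ hζ hind u (htop ▸ Subfield.mem_top u) hud
  · rintro ⟨α, hα, a, haF, rfl⟩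
    rw [hD.1, S7.D_sum hD]
    apply add_mem
    · refine sum_mem fun i _ => ?_
      rw [hD.2, (hα i).2, zero_mul, zero_add]
      exact mul_mem (hα i).1 (hζ i)
    · exact hF a haF
end

section
/- Let F be a differential field of characteristic zero with field of constants C, and let E = F(ζ₁,…,ζ_t) be an antiderivative extension of F with ζ₁,…,ζ_t algebraically independent over F. Then every σ ∈ G(E|F) satisfies σ(ζᵢ) = ζᵢ + α_{iσ} for unique constants α_{iσ} ∈ C, and the map σ ↦ (α_{1σ},…,α_{tσ}) is a group isomorphism from G(E|F) onto the additive group (Cᵗ, +); in particular G(E|F) is commutative. -/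
open MvPolynomial

section Helpers

variable {E : Type*} [Field E]

theorem stmt9_rangeAlg (F : Subfield E) :
    Set.range (algebraMap F E) = (F : Set E) := by
  ext x
  constructor
  · rintro ⟨y, rfl⟩; exact y.2
  · intro h; exact ⟨⟨x, h⟩, rfl⟩

theorem stmt9_adjoinTop (F : Subfield E) {t : ℕ} (ζ : Fin t → E)
    (htop : Subfield.closure ((F : Set E) ∪ Set.range ζ) = ⊤) :
    IntermediateField.adjoin F (Set.range ζ) = ⊤ := by
  rw [← IntermediateField.toSubfield_injective.eq_iff]
  rw [IntermediateField.adjoin_toSubfield, stmt9_rangeAlg, htop]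
  rfl

noncomputable def stmt9_shiftP {F : Type*} [CommRing F] (t : ℕ) (b : Fin t → F) :
    MvPolynomial (Fin t) F ≃ₐ[F] MvPolynomial (Fin t) F :=
  AlgEquiv.ofAlgHom (aeval (fun i => X i + C (b i))) (aeval (fun i => X i - C (b i)))
    (by apply MvPolynomial.algHom_ext; intro i; simp)
    (by apply MvPolynomial.algHom_ext; intro i; simp)

theorem stmt9_shiftP_X {F : Type*} [CommRing F] (t : ℕ) (b : Fin t → F) (i : Fin t) :
    stmt9_shiftP t b (X i) = X i + C (b i) := by simp [stmt9_shiftP]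

noncomputable def stmt9_sigma0 (F : Subfield E) {t : ℕ} {ζ : Fin t → E}
    (hind : AlgebraicIndependent F ζ)
    (htop : IntermediateField.adjoin F (Set.range ζ) = ⊤) (b : Fin t → F) :
    E ≃ₐ[F] E :=
  let eE : FractionRing (MvPolynomial (Fin t) F) ≃ₐ[F] E :=
    (hind.aevalEquivField.trans (IntermediateField.equivOfEq htop)).trans
      IntermediateField.topEquiv
  let shiftK : FractionRing (MvPolynomial (Fin t) F) ≃ₐ[F] _ :=
    IsFractionRing.algEquivOfAlgEquiv (stmt9_shiftP t b)
  (eE.symm.trans shiftK).trans eE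

theorem stmt9_eE_alg (F : Subfield E) {t : ℕ} {ζ : Fin t → E}
    (hind : AlgebraicIndependent F ζ)
    (htop : IntermediateField.adjoin F (Set.range ζ) = ⊤)
    (p : MvPolynomial (Fin t) F) :
    ((hind.aevalEquivField.trans (IntermediateField.equivOfEq htop)).trans
      IntermediateField.topEquiv)
      (algebraMap (MvPolynomial (Fin t) F) (FractionRing (MvPolynomial (Fin t) F)) p) =
      aeval ζ p := by
  have := hind.aevalEquivField_algebraMap_apply_coe p
  simp only [AlgEquiv.trans_apply]
  rw [← this]
  rfl

theorem stmt9_sigma0_aeval (F : Subfield E) {t : ℕ} {ζ : Fin t → E}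
    (hind : AlgebraicIndependent F ζ)
    (htop : IntermediateField.adjoin F (Set.range ζ) = ⊤) (b : Fin t → F)
    (p : MvPolynomial (Fin t) F) :
    stmt9_sigma0 F hind htop b (aeval ζ p) = aeval ζ (stmt9_shiftP t b p) := by
  have keq : stmt9_sigma0 F hind htop b (aeval ζ p) =
      ((hind.aevalEquivField.trans (IntermediateField.equivOfEq htop)).trans
        IntermediateField.topEquiv)
        ((IsFractionRing.algEquivOfAlgEquiv (stmt9_shiftP t b))
          (((hind.aevalEquivField.trans (IntermediateField.equivOfEq htop)).trans
            IntermediateField.topEquiv).symm (aeval ζ p))) := rfl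
  rw [keq, ← stmt9_eE_alg F hind htop p, AlgEquiv.symm_apply_apply,
    IsFractionRing.algEquivOfAlgEquiv_algebraMap]
  exact stmt9_eE_alg F hind htop _

theorem stmt9_sigma0_zeta (F : Subfield E) {t : ℕ} {ζ : Fin t → E}
    (hind : AlgebraicIndependent F ζ)
    (htop : IntermediateField.adjoin F (Set.range ζ) = ⊤) (b : Fin t → F) (i : Fin t) :
    stmt9_sigma0 F hind htop b (ζ i) = ζ i + (b i : E) := by
  have h := stmt9_sigma0_aeval F hind htop b (X i)
  rw [stmt9_shiftP_X] at h
  rw [aeval_X] at h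
  rw [h, map_add, aeval_X, aeval_C]
  rfl

end Helpers

section DCalc

variable {E : Type*} [Field E] {D : E → E} (hD : IsDeriv D)
include hD

theorem stmt9_D0 : D 0 = 0 := by
  have h := hD.1 0 0
  simp only [add_zero] at h
  exact left_eq_add.mp h

theorem stmt9_D1 : D 1 = 0 := by
  have h := hD.2 1 1
  simp only [mul_one, one_mul] at h
  exact left_eq_add.mp h

theorem stmt9_Dneg (x : E) : D (-x) = -D x := by
  have h := hD.1 x (-x)
  rw [add_neg_cancel, stmt9_D0 hD] at h
  linear_combination -h

theorem stmt9_Dsub (x y : E) : D (x - y) = D x - D y := by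
  rw [sub_eq_add_neg, hD.1, stmt9_Dneg hD, sub_eq_add_neg]

theorem stmt9_Dinv (x : E) (hx : x ≠ 0) : D x⁻¹ = -(D x * x⁻¹ * x⁻¹) := by
  have h := hD.2 x x⁻¹
  rw [mul_inv_cancel₀ hx, stmt9_D1 hD] at h
  have h2 : x * D x⁻¹ = -(D x * x⁻¹) := by linear_combination -h
  apply mul_left_cancel₀ hx
  rw [h2]
  field_simp

end DCalc

section Auts

variable {E : Type*} [Field E] {D : E → E} (hD : IsDeriv D)
  {F : Subfield E} (hF : IsDiffSubfield D F)
  {t : ℕ} {ζ : Fin t → E} (hζ : ∀ i, D (ζ i) ∈ F)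
  (htop : adjoinSF F (Set.range ζ) = ⊤)

include hD hF hζ htop in
theorem stmt9_diffComm (σ : E ≃+* E) (hfix : ∀ x ∈ F, σ x = x)
    (hz : ∀ i, D (σ (ζ i)) = D (ζ i)) (y : E) :
    σ (D y) = D (σ y) := by
  set S : Subfield E :=
    { carrier := {y : E | σ (D y) = D (σ y)}
      zero_mem' := by simp [stmt9_D0 hD]
      one_mem' := by simp [stmt9_D1 hD]
      add_mem' := by
        intro a b ha hb
        simp only [Set.mem_setOf_eq] at *
        rw [hD.1, map_add, ha, hb, map_add, hD.1]
      mul_mem' := by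
        intro a b ha hb
        simp only [Set.mem_setOf_eq] at *
        rw [hD.2, map_add, map_mul, map_mul, ha, hb, map_mul, hD.2]
      neg_mem' := by
        intro a ha
        simp only [Set.mem_setOf_eq] at *
        rw [stmt9_Dneg hD, map_neg, map_neg, ha, stmt9_Dneg hD]
      inv_mem' := by
        intro a ha
        simp only [Set.mem_setOf_eq] at *
        by_cases h0 : a = 0
        · simp [h0, stmt9_D0 hD]
        · have hσ0 : σ a ≠ 0 := fun h => h0 (by simpa using σ.injective (h.trans (map_zero σ).symm))
          rw [stmt9_Dinv hD a h0, map_inv₀, stmt9_Dinv hD (σ a) hσ0, map_neg, map_mul,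
            map_mul, map_inv₀, ha] } with hS
  have hle : adjoinSF F (Set.range ζ) ≤ S := by
    apply Subfield.closure_le.mpr
    rintro x (hxF | ⟨i, rfl⟩)
    · show σ (D x) = D (σ x)
      rw [hfix x hxF, hfix _ (hF x hxF)]
    · show σ (D (ζ i)) = D (σ (ζ i))
      rw [hfix _ (hζ i), hz i]
  have : y ∈ S := hle.trans' (le_of_eq htop.symm) trivial
  exact this

omit hD hF hζ in
include htop in
theorem stmt9_agree (σ τ : E ≃+* E) (hfix : ∀ x ∈ F, σ x = τ x)
    (hz : ∀ i, σ (ζ i) = τ (ζ i)) : σ = τ := by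
  have hle : adjoinSF F (Set.range ζ) ≤ RingHom.eqLocusField σ.toRingHom τ.toRingHom := by
    apply Subfield.closure_le.mpr
    rintro x (hxF | ⟨i, rfl⟩)
    · exact hfix x hxF
    · exact hz i
  ext y
  exact hle.trans' (le_of_eq htop.symm) (Subfield.mem_top y)

end Auts

/-- for an antiderivative extension `E = F(ζ₁,…,ζ_t)` (the ambient
field, `⊤`) with `ζᵢ` algebraically independent over `F`, every differential
automorphism `σ` over `F` satisfies `σ(ζᵢ) = ζᵢ + α_{iσ}` for unique constants
`α_{iσ}`, and `σ ↦ (α_{1σ},…,α_{tσ})` is a bijective homomorphism from `G(E|F)`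
onto the additive group of `t`-tuples of constants; in particular `G(E|F)` is
commutative. -/
theorem statement9 {E : Type*} [Field E] [CharZero E] (D : E → E) (hD : IsDeriv D)
    (F : Subfield E) (hF : IsDiffSubfield D F)
    (hNNC : ∀ x : E, D x = 0 → x ∈ F)  -- E is a no new constants extension of F
    (t : ℕ) (ζ : Fin t → E) (hζ : ∀ i, D (ζ i) ∈ F)
    (hind : AlgebraicIndependent F ζ)
    (htop : adjoinSF F (Set.range ζ) = ⊤) :
    ∃ α : (E ≃+* E) → Fin t → E,
      (∀ σ, IsDiffAut D F σ → ∀ i, α σ i ∈ F ∧ D (α σ i) = 0) ∧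
      (∀ σ, IsDiffAut D F σ → ∀ i, σ (ζ i) = ζ i + α σ i) ∧
      (∀ σ, IsDiffAut D F σ → ∀ i (β : E), σ (ζ i) = ζ i + β → β = α σ i) ∧
      (∀ σ τ, IsDiffAut D F σ → IsDiffAut D F τ → α (σ * τ) = α σ + α τ) ∧
      (∀ σ τ, IsDiffAut D F σ → IsDiffAut D F τ → α σ = α τ → σ = τ) ∧
      (∀ β : Fin t → E, (∀ i, β i ∈ F ∧ D (β i) = 0) →
        ∃ σ, IsDiffAut D F σ ∧ α σ = β) ∧
      (∀ σ τ, IsDiffAut D F σ → IsDiffAut D F τ → σ * τ = τ * σ) := by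
  
  classical
  have htop' : IntermediateField.adjoin F (Set.range ζ) = ⊤ := stmt9_adjoinTop F ζ htop
  set αf : (E ≃+* E) → Fin t → E := fun σ i => σ (ζ i) - ζ i with hαf
  have hconst : ∀ σ, IsDiffAut D F σ → ∀ i, αf σ i ∈ F ∧ D (αf σ i) = 0 := by
    intro σ hσ i
    have hDσζ : D (σ (ζ i)) = D (ζ i) := by rw [← hσ.2, hσ.1 _ (hζ i)]
    have hD0' : D (αf σ i) = 0 := by
      show D (σ (ζ i) - ζ i) = 0
      rw [stmt9_Dsub hD, hDσζ, sub_self]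
    exact ⟨hNNC _ hD0', hD0'⟩
  have heq : ∀ σ, IsDiffAut D F σ → ∀ i, σ (ζ i) = ζ i + αf σ i := by
    intro σ hσ i
    show σ (ζ i) = ζ i + (σ (ζ i) - ζ i)
    ring
  have hmul : ∀ σ τ : E ≃+* E, IsDiffAut D F σ → IsDiffAut D F τ → IsDiffAut D F (σ * τ) := by
    intro σ τ hσ hτ
    constructor
    · intro x hx
      show σ (τ x) = x
      rw [hτ.1 x hx, hσ.1 x hx]
    · intro y
      show σ (τ (D y)) = D (σ (τ y))
      rw [hτ.2, hσ.2]
  have hadd : ∀ σ τ, IsDiffAut D F σ → IsDiffAut D F τ → αf (σ * τ) = αf σ + αf τ := by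
    intro σ τ hσ hτ
    funext i
    show σ (τ (ζ i)) - ζ i = (σ (ζ i) - ζ i) + (τ (ζ i) - ζ i)
    rw [heq τ hτ i, map_add, hσ.1 _ (hconst τ hτ i).1]
    ring
  have hinj : ∀ σ τ, IsDiffAut D F σ → IsDiffAut D F τ → αf σ = αf τ → σ = τ := by
    intro σ τ hσ hτ he
    refine stmt9_agree htop σ τ (fun x hx => by rw [hσ.1 x hx, hτ.1 x hx]) (fun i => ?_)
    rw [heq σ hσ i, heq τ hτ i, he]
  refine ⟨αf, hconst, heq, ?_, hadd, hinj, ?_, ?_⟩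
  · intro σ hσ i β hβ
    have := heq σ hσ i
    rw [hβ] at this
    exact add_right_injective _ this
  · intro β hβ
    set b : Fin t → F := fun i => ⟨β i, (hβ i).1⟩ with hb
    set σa := stmt9_sigma0 F hind htop' b with hσa
    set σ : E ≃+* E := σa.toRingEquiv with hσ
    have hfix : ∀ x ∈ F, σ x = x := fun x hx => σa.commutes ⟨x, hx⟩
    have hzeta : ∀ i, σ (ζ i) = ζ i + β i := fun i => stmt9_sigma0_zeta F hind htop' b i
    have hda : IsDiffAut D F σ := by
      refine ⟨hfix, stmt9_diffComm hD hF hζ htop σ hfix (fun i => ?_)⟩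
      rw [hzeta i, hD.1, (hβ i).2, add_zero]
    refine ⟨σ, hda, ?_⟩
    funext i
    show σ (ζ i) - ζ i = β i
    rw [hzeta i]
    ring
  · intro σ τ hσ hτ
    refine hinj _ _ (hmul σ τ hσ hτ) (hmul τ σ hτ hσ) ?_
    rw [hadd σ τ hσ hτ, hadd τ σ hτ hσ, add_comm]
end
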